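/- Let G₀ be a connected simple graph and u ∈ V(G₀). Let k ≥ 4 and let T be a tree on k vertices with T not isomorphic to the path P_k and T not isomorphic to the star S_k, and let w be any vertex of T. Let G₁ be the graph obtained from the disjoint union of G₀ and T by identifying u with w; let G₂ be the graph obtained from the disjoint union of G₀ and the path P_k by identifying u with an endvertex of P_k; and let G₃ be the graph obtained from the disjoint union of G₀ and the star S_k by identifying u with the center of S_k. Then H(G₂) < H(G₁) < H(G₃). -/

import Mathlib

open Finset SimpleGraph

open Classical in
/-- The Harary index: half the sum, over ordered pairs of distinct vertices, of the
reciprocal of the shortest-path distance (so each unordered pair is counted once). -/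
noncomputable def harary {V : Type*} [Fintype V] (G : SimpleGraph V) : ℝ :=
  (∑ u : V, ∑ v : V, if u = v then 0 else (1 : ℝ) / (G.dist u v)) / 2

/-- The path graph `P_n` on `n` vertices. -/
def pathG (n : ℕ) : SimpleGraph (Fin n) :=
  SimpleGraph.fromRel (fun x y => (y : ℕ) = (x : ℕ) + 1)

/-- The star graph `S_n` on `n` vertices, with center `0`. -/
def starG (n : ℕ) : SimpleGraph (Fin n) :=
  SimpleGraph.fromRel (fun x y => (x : ℕ) = 0 ∧ (y : ℕ) ≠ 0)

/-- The spider (starlike tree) `S(L 0, …, L (k-1))`: a center `none` together with `k`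
disjoint paths, the `i`-th having `L i` vertices, the center joined to vertex `0` of each leg. -/
def spider {k : ℕ} (L : Fin k → ℕ) : SimpleGraph (Option (Σ i : Fin k, Fin (L i))) :=
  SimpleGraph.fromRel (fun x y =>
    (∃ (i : Fin k) (j : Fin (L i)), x = none ∧ y = some ⟨i, j⟩ ∧ (j : ℕ) = 0) ∨
    (∃ (i : Fin k) (j j' : Fin (L i)),
      x = some ⟨i, j⟩ ∧ y = some ⟨i, j'⟩ ∧ (j' : ℕ) = (j : ℕ) + 1))

/-- Leg lengths of the balanced starlike tree `BS n k`: the legs sum to `n - 1` and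
pairwise differ by at most `1`. -/
def balancedLegs (n k : ℕ) : Fin k → ℕ :=
  fun i => (n - 1) / k + if (i : ℕ) < (n - 1) % k then 1 else 0

/-- The balanced starlike tree `BS_{n,k}` on `n` vertices with `k` legs of almost equal length. -/
def BS (n k : ℕ) : SimpleGraph (Option (Σ i : Fin k, Fin (balancedLegs n k i))) :=
  spider (balancedLegs n k)

/-- Leg lengths of the broom `B_{n,k}`: one leg with `n - k` vertices, `k - 1` legs with one. -/
def broomLegs (n k : ℕ) : Fin k → ℕ := fun i => if (i : ℕ) = 0 then n - k else 1

/-- The broom `B_{n,k} = S(n-k, 1, …, 1)`. -/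
def broom (n k : ℕ) : SimpleGraph (Option (Σ i : Fin k, Fin (broomLegs n k i))) :=
  spider (broomLegs n k)

/-- Leg lengths of the spur `A_{n,m}`: `n - m - 1` legs with two vertices, the rest with one. -/
def spurLegs (n m : ℕ) : Fin m → ℕ := fun i => if (i : ℕ) < n - m - 1 then 2 else 1

/-- The spur `A_{n,m}`: the star `S_{m+1}` with a pendent edge attached to `n - m - 1`
of its pendent vertices. -/
def spur (n m : ℕ) : SimpleGraph (Option (Σ i : Fin m, Fin (spurLegs n m i))) :=
  spider (spurLegs n m)

/-- The caterpillar `C_{n,d,i}`: a path `v_0 v_1 … v_d` with `n - d - 1` pendent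
vertices attached at `v_i`. -/
def caterpillar (n d i : ℕ) : SimpleGraph (Fin (d + 1) ⊕ Fin (n - d - 1)) :=
  SimpleGraph.fromRel (fun x y =>
    (∃ a b : Fin (d + 1), x = Sum.inl a ∧ y = Sum.inl b ∧ (b : ℕ) = (a : ℕ) + 1) ∨
    (∃ (a : Fin (d + 1)) (p : Fin (n - d - 1)), (a : ℕ) = i ∧ x = Sum.inl a ∧ y = Sum.inr p))

/-- Degree of a vertex. -/
noncomputable def deg {V : Type*} [Fintype V] (G : SimpleGraph V) (v : V) : ℕ :=
  (G.neighborSet v).ncard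

/-- Eccentricity of a vertex: the maximum distance to another vertex. -/
noncomputable def ecc {V : Type*} [Fintype V] (G : SimpleGraph V) (v : V) : ℕ :=
  Finset.univ.sup fun u => G.dist v u

/-- Diameter of a graph: the maximum eccentricity. -/
noncomputable def graphDiam {V : Type*} [Fintype V] (G : SimpleGraph V) : ℕ :=
  Finset.univ.sup fun v => ecc G v

/-- Radius of a graph: the minimum eccentricity. -/
noncomputable def graphRadius {V : Type*} [Fintype V] (G : SimpleGraph V) : ℕ :=
  sInf (Set.range fun v => ecc G v)

/-- Matching number: the maximum cardinality of a set of pairwise non-incident edges. -/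
noncomputable def matchingNumber {V : Type*} [Fintype V] (G : SimpleGraph V) : ℕ :=
  sSup {k | ∃ M : Finset (Sym2 V), M.card = k ∧ (∀ e ∈ M, e ∈ G.edgeSet) ∧
    ∀ e ∈ M, ∀ f ∈ M, e ≠ f → ∀ v : V, ¬(v ∈ e ∧ v ∈ f)}

/-- Independence number: the maximum cardinality of a set of pairwise non-adjacent vertices. -/
noncomputable def indepNum {V : Type*} [Fintype V] (G : SimpleGraph V) : ℕ :=
  sSup {k | ∃ s : Finset V, s.card = k ∧ ∀ u ∈ s, ∀ v ∈ s, u ≠ v → ¬ G.Adj u v}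


/-- `graft G u H w` is the graph obtained from the disjoint union of `G` and `H`
by identifying the vertex `u` of `G` with the vertex `w` of `H`. -/
def graft {V W : Type*} (G : SimpleGraph V) (u : V) (H : SimpleGraph W) (w : W) :
    SimpleGraph (V ⊕ {x : W // x ≠ w}) :=
  SimpleGraph.fromRel (fun a b =>
    (∃ x y : V, G.Adj x y ∧ a = Sum.inl x ∧ b = Sum.inl y) ∨
    (∃ x y : {z : W // z ≠ w}, H.Adj x.1 y.1 ∧ a = Sum.inr x ∧ b = Sum.inr y) ∨
    (∃ y : {z : W // z ≠ w}, H.Adj w y.1 ∧ a = Sum.inl u ∧ b = Sum.inr y))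

namespace HararyAux

variable {α β : Type*}

/-- Walk length lower bound from an integer potential that is 1-Lipschitz on edges. -/
lemma potential_le {G : SimpleGraph α} (ψ : α → ℤ)
    (h : ∀ a b, G.Adj a b → |ψ a - ψ b| ≤ 1) {a b : α} (p : G.Walk a b) :
    |ψ a - ψ b| ≤ (p.length : ℤ) := by
  induction p with
  | nil => simp
  | cons hadj q ih =>
    rename_i x y z
    have := h _ _ hadj
    have habs : |ψ x - ψ z| ≤ |ψ x - ψ y| + |ψ y - ψ z| := by
      have : ψ x - ψ z = (ψ x - ψ y) + (ψ y - ψ z) := by ring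
      rw [this]; exact abs_add_le _ _
    simp only [SimpleGraph.Walk.length_cons]
    push_cast
    omega

lemma dist_ge_potential {G : SimpleGraph α} (ψ : α → ℤ)
    (h : ∀ a b, G.Adj a b → |ψ a - ψ b| ≤ 1) {a b : α} (hr : G.Reachable a b) :
    |ψ a - ψ b| ≤ (G.dist a b : ℤ) := by
  obtain ⟨p, hp⟩ := hr.exists_walk_length_eq_dist
  simpa [hp] using potential_le ψ h p

/-- An "almost homomorphism" (edges map to edges or collapse) contracts distances. -/
lemma dist_le_of_almostHom {G : SimpleGraph α} {H : SimpleGraph β} (f : α → β)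
    (hf : ∀ a b, G.Adj a b → f a = f b ∨ H.Adj (f a) (f b))
    (hH : H.Connected) {a b : α} (p : G.Walk a b) :
    H.dist (f a) (f b) ≤ p.length := by
  induction p with
  | nil => simp
  | cons hadj q ih =>
    rename_i x y z
    have h1 : H.dist (f x) (f y) ≤ 1 := by
      rcases hf _ _ hadj with h | h
      · rw [h, SimpleGraph.dist_self]; omega
      · exact le_of_eq (dist_eq_one_iff_adj.mpr h)
    calc H.dist (f x) (f z) ≤ H.dist (f x) (f y) + H.dist (f y) (f z) := hH.dist_triangle
      _ ≤ 1 + q.length := by omega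
      _ = (SimpleGraph.Walk.cons hadj q).length := by simp [SimpleGraph.Walk.length_cons]; omega

lemma dist_le_dist_of_almostHom {G : SimpleGraph α} {H : SimpleGraph β} (f : α → β)
    (hf : ∀ a b, G.Adj a b → f a = f b ∨ H.Adj (f a) (f b))
    (hH : H.Connected) {a b : α} (hr : G.Reachable a b) :
    H.dist (f a) (f b) ≤ G.dist a b := by
  obtain ⟨p, hp⟩ := hr.exists_walk_length_eq_dist
  simpa [hp] using dist_le_of_almostHom f hf hH p

/-- distances in a connected graph are at most `card - 1`. -/
lemma dist_le_card [Fintype α] {G : SimpleGraph α} (hG : G.Connected) (a b : α) :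
    G.dist a b ≤ Fintype.card α - 1 := by
  obtain ⟨p, hp, hl⟩ := hG.exists_path_of_dist a b
  have := hp.length_lt
  omega

/-- telescoping sum over `Ico a K`. -/
lemma sum_Ico_telescope (g : ℕ → ℝ) {a K : ℕ} (h : a ≤ K) :
    ∑ ℓ ∈ Finset.Ico a K, (g ℓ - g (ℓ + 1)) = g a - g K := by
  induction K, h using Nat.le_induction with
  | base => simp
  | succ K hK ih =>
    rw [Finset.sum_Ico_succ_top hK, ih]
    ring

/-- Abel-type rewriting of a sum of a function of "distances". -/
lemma abel_sum {ι : Type*} (s : Finset ι) (d : ι → ℕ) (g : ℕ → ℝ) (K : ℕ)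
    (hd : ∀ i ∈ s, 1 ≤ d i ∧ d i ≤ K) :
    ∑ i ∈ s, g (d i) =
      s.card * g K + ∑ ℓ ∈ Finset.Ico 1 K,
        (g ℓ - g (ℓ + 1)) * ((s.filter (fun i => d i ≤ ℓ)).card) := by
  classical
  have key : ∀ i ∈ s, g (d i) = g K + ∑ ℓ ∈ Finset.Ico 1 K,
      (if d i ≤ ℓ then (g ℓ - g (ℓ + 1)) else 0) := by
    intro i hi
    obtain ⟨h1, h2⟩ := hd i hi
    have : ∑ ℓ ∈ Finset.Ico 1 K, (if d i ≤ ℓ then (g ℓ - g (ℓ + 1)) else 0)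
        = ∑ ℓ ∈ Finset.Ico (d i) K, (g ℓ - g (ℓ + 1)) := by
      rw [← Finset.sum_filter]
      congr 1
      ext ℓ
      simp only [Finset.mem_filter, Finset.mem_Ico]
      omega
    rw [this, sum_Ico_telescope g h2]
    ring
  rw [Finset.sum_congr rfl key, Finset.sum_add_distrib, Finset.sum_const, nsmul_eq_mul]
  congr 1
  rw [Finset.sum_comm]
  refine Finset.sum_congr rfl fun ℓ _ => ?_
  rw [Finset.sum_ite, Finset.sum_const, Finset.sum_const]
  simp [mul_comm]

lemma abel_le {ι κ : Type*} (s : Finset ι) (t : Finset κ) (d : ι → ℕ) (e : κ → ℕ)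
    (g : ℕ → ℝ) (K : ℕ) (hcard : s.card = t.card)
    (hd : ∀ i ∈ s, 1 ≤ d i ∧ d i ≤ K) (he : ∀ j ∈ t, 1 ≤ e j ∧ e j ≤ K)
    (hg : ∀ ℓ, 1 ≤ ℓ → ℓ < K → g (ℓ + 1) ≤ g ℓ)
    (hcount : ∀ ℓ, 1 ≤ ℓ → ℓ < K →
      ((s.filter (fun i => d i ≤ ℓ)).card ≤ (t.filter (fun j => e j ≤ ℓ)).card)) :
    ∑ i ∈ s, g (d i) ≤ ∑ j ∈ t, g (e j) := by
  classical
  rw [abel_sum s d g K hd, abel_sum t e g K he, hcard]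
  refine add_le_add_right (Finset.sum_le_sum fun ℓ hℓ => ?_) _
  simp only [Finset.mem_Ico] at hℓ
  have h1 : (0:ℝ) ≤ g ℓ - g (ℓ+1) := by
    have := hg ℓ hℓ.1 hℓ.2; linarith
  have h2 := hcount ℓ hℓ.1 hℓ.2
  exact mul_le_mul_of_nonneg_left (by exact_mod_cast h2) h1

lemma abel_lt {ι κ : Type*} (s : Finset ι) (t : Finset κ) (d : ι → ℕ) (e : κ → ℕ)
    (g : ℕ → ℝ) (K : ℕ) (hcard : s.card = t.card)
    (hd : ∀ i ∈ s, 1 ≤ d i ∧ d i ≤ K) (he : ∀ j ∈ t, 1 ≤ e j ∧ e j ≤ K)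
    (hg : ∀ ℓ, 1 ≤ ℓ → ℓ < K → g (ℓ + 1) < g ℓ)
    (hcount : ∀ ℓ, 1 ≤ ℓ → ℓ < K →
      ((s.filter (fun i => d i ≤ ℓ)).card ≤ (t.filter (fun j => e j ≤ ℓ)).card))
    (hstrict : ∃ ℓ, 1 ≤ ℓ ∧ ℓ < K ∧
      ((s.filter (fun i => d i ≤ ℓ)).card < (t.filter (fun j => e j ≤ ℓ)).card)) :
    ∑ i ∈ s, g (d i) < ∑ j ∈ t, g (e j) := by
  classical
  rw [abel_sum s d g K hd, abel_sum t e g K he, hcard]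
  refine add_lt_add_right ?_ _
  obtain ⟨ℓ₀, hℓ₀1, hℓ₀2, hℓ₀3⟩ := hstrict
  refine Finset.sum_lt_sum (fun ℓ hℓ => ?_) ⟨ℓ₀, Finset.mem_Ico.mpr ⟨hℓ₀1, hℓ₀2⟩, ?_⟩
  · simp only [Finset.mem_Ico] at hℓ
    have h1 : (0:ℝ) ≤ g ℓ - g (ℓ+1) := by have := hg ℓ hℓ.1 hℓ.2; linarith
    exact mul_le_mul_of_nonneg_left (by exact_mod_cast hcount ℓ hℓ.1 hℓ.2) h1
  · have h1 : (0:ℝ) < g ℓ₀ - g (ℓ₀+1) := by have := hg ℓ₀ hℓ₀1 hℓ₀2; linarith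
    exact mul_lt_mul_of_pos_left (by exact_mod_cast hℓ₀3) h1

variable {α : Type*}

lemma dist_getVert_le {G : SimpleGraph α} (hG : G.Connected) {a b : α} (p : G.Walk a b)
    (i : ℕ) : G.dist a (p.getVert i) ≤ i := by
  induction i with
  | zero => simp [SimpleGraph.Walk.getVert_zero]
  | succ i ih =>
    by_cases hi : i < p.length
    · have hadj := p.adj_getVert_succ hi
      calc G.dist a (p.getVert (i+1)) ≤
          G.dist a (p.getVert i) + G.dist (p.getVert i) (p.getVert (i+1)) := hG.dist_triangle
        _ ≤ i + 1 := by
            have := SimpleGraph.dist_eq_one_iff_adj.mpr hadj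
            omega
    · have e1 : p.getVert (i+1) = b := p.getVert_of_length_le (by omega)
      have e2 : p.getVert i = b := p.getVert_of_length_le (by omega)
      rw [e1, ← e2]
      exact ih.trans (by omega)

lemma dist_getVert_le' {G : SimpleGraph α} (hG : G.Connected) {a b : α} (p : G.Walk a b)
    (i : ℕ) (hi : i ≤ p.length) : G.dist (p.getVert i) b ≤ p.length - i := by
  have h := dist_getVert_le hG p.reverse (p.length - i)
  rw [SimpleGraph.Walk.getVert_reverse] at h
  have : p.length - (p.length - i) = i := by omega
  rw [this] at h
  rw [SimpleGraph.dist_comm]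
  calc G.dist b (p.getVert i) ≤ p.length - i := by simpa using h

lemma dist_getVert_eq {G : SimpleGraph α} (hG : G.Connected) {a b : α} {p : G.Walk a b}
    (hp : p.length = G.dist a b) (i : ℕ) (hi : i ≤ p.length) :
    G.dist a (p.getVert i) = i ∧ G.dist (p.getVert i) b = p.length - i := by
  have h1 := dist_getVert_le hG p i
  have h2 := dist_getVert_le' hG p i hi
  have h3 : G.dist a b ≤ G.dist a (p.getVert i) + G.dist (p.getVert i) b := hG.dist_triangle
  omega

/-- In a connected graph, the ball of radius `ℓ` around `w` contains at least
`min ℓ (card - 1)` vertices other than `w`. -/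
lemma ballCount_ge {G : SimpleGraph α} [Fintype α] [DecidableEq α] (hG : G.Connected) (w : α) (ℓ : ℕ) :
    min ℓ (Fintype.card α - 1) ≤ (univ.filter (fun y => y ≠ w ∧ G.dist w y ≤ ℓ)).card := by
  by_cases hall : ∀ y, G.dist w y ≤ ℓ
  · have : (univ.filter (fun y => y ≠ w ∧ G.dist w y ≤ ℓ)) = univ.erase w := by
      ext y; simp [Finset.mem_erase, hall y]
    rw [this, Finset.card_erase_of_mem (Finset.mem_univ w), Finset.card_univ]
    exact min_le_right _ _
  · push_neg at hall
    obtain ⟨y₀, hy₀⟩ := hall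
    obtain ⟨p, hp⟩ := (hG w y₀).exists_walk_length_eq_dist
    have hlen : ℓ + 1 ≤ p.length := by omega
    have key : ∀ j : Fin ℓ, G.dist w (p.getVert (j + 1)) = j + 1 := fun j =>
      (dist_getVert_eq hG hp (j + 1) (by omega)).1
    have hinj : Function.Injective (fun j : Fin ℓ => p.getVert (j + 1)) := by
      intro i j hij
      have hi := key i; have hj := key j
      simp only at hij
      rw [hij] at hi
      exact Fin.ext (by omega)
    calc min ℓ (Fintype.card α - 1) ≤ ℓ := min_le_left _ _
      _ = (univ : Finset (Fin ℓ)).card := by simp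
      _ ≤ _ := Finset.card_le_card_of_injOn (fun j => p.getVert (j + 1))
          (fun j _ => by
            have := key j
            simp only [Finset.coe_filter, Set.mem_setOf_eq, Finset.mem_filter, Finset.mem_univ, true_and]
            constructor
            · intro h; rw [h] at this; simp [SimpleGraph.dist_self] at this
            · omega)
          (hinj.injOn)

variable {V W : Type*} {G : SimpleGraph V} {u : V} {H : SimpleGraph W} {w : W}

lemma graft_adj_inl_inl {x y : V} :
    (graft G u H w).Adj (Sum.inl x) (Sum.inl y) ↔ G.Adj x y := by
  simp only [graft, SimpleGraph.fromRel_adj]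
  constructor
  · rintro ⟨hne, h | h⟩
    · rcases h with ⟨a, b, hab, h1, h2⟩ | ⟨a, b, _, h1, _⟩ | ⟨a, _, _, h2⟩
      · rw [Sum.inl.injEq] at h1 h2; rwa [h1, h2]
      · exact absurd h1 (by simp)
      · exact absurd h2 (by simp)
    · rcases h with ⟨a, b, hab, h1, h2⟩ | ⟨a, b, _, h1, _⟩ | ⟨a, _, _, h2⟩
      · rw [Sum.inl.injEq] at h1 h2; rw [h1, h2]; exact hab.symm
      · exact absurd h1 (by simp)
      · exact absurd h2 (by simp)
  · intro h
    exact ⟨by simp [h.ne], Or.inl (Or.inl ⟨x, y, h, rfl, rfl⟩)⟩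

lemma graft_adj_inr_inr {x y : {z : W // z ≠ w}} :
    (graft G u H w).Adj (Sum.inr x) (Sum.inr y) ↔ H.Adj x.1 y.1 := by
  simp only [graft, SimpleGraph.fromRel_adj]
  constructor
  · rintro ⟨hne, h | h⟩
    · rcases h with ⟨a, b, _, h1, _⟩ | ⟨a, b, hab, h1, h2⟩ | ⟨a, _, h1, _⟩
      · exact absurd h1 (by simp)
      · rw [Sum.inr.injEq] at h1 h2; rwa [h1, h2]
      · exact absurd h1 (by simp)
    · rcases h with ⟨a, b, _, h1, _⟩ | ⟨a, b, hab, h1, h2⟩ | ⟨a, _, h1, _⟩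
      · exact absurd h1 (by simp)
      · rw [Sum.inr.injEq] at h1 h2; rw [h1, h2]; exact hab.symm
      · exact absurd h1 (by simp)
  · intro h
    refine ⟨?_, Or.inl (Or.inr (Or.inl ⟨x, y, h, rfl, rfl⟩))⟩
    simp only [ne_eq, Sum.inr.injEq]
    intro hxy
    exact h.ne (congrArg Subtype.val hxy)

lemma graft_adj_inl_inr {x : V} {y : {z : W // z ≠ w}} :
    (graft G u H w).Adj (Sum.inl x) (Sum.inr y) ↔ x = u ∧ H.Adj w y.1 := by
  simp only [graft, SimpleGraph.fromRel_adj]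
  constructor
  · rintro ⟨hne, h | h⟩
    · rcases h with ⟨a, b, _, _, h2⟩ | ⟨a, b, _, h1, _⟩ | ⟨a, hab, h1, h2⟩
      · exact absurd h2 (by simp)
      · exact absurd h1 (by simp)
      · rw [Sum.inl.injEq] at h1
        rw [Sum.inr.injEq] at h2
        exact ⟨h1, h2 ▸ hab⟩
    · rcases h with ⟨a, b, _, h1, _⟩ | ⟨a, b, _, _, h2⟩ | ⟨a, _, h1, _⟩
      · exact absurd h1 (by simp)
      · exact absurd h2 (by simp)
      · exact absurd h1 (by simp)
  · rintro ⟨rfl, h⟩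
    exact ⟨by simp, Or.inl (Or.inr (Or.inr ⟨y, h, rfl, rfl⟩))⟩

/-- the map `W → V ⊕ {z // z ≠ w}` sending `w` to `inl u`. -/
def toGraft [DecidableEq W] (u : V) (w : W) : W → (V ⊕ {z : W // z ≠ w}) :=
  fun z => if h : z = w then Sum.inl u else Sum.inr ⟨z, h⟩

lemma toGraft_hom [DecidableEq W] {a b : W} (h : H.Adj a b) :
    (graft G u H w).Adj (toGraft u w a) (toGraft u w b) := by
  unfold toGraft
  by_cases ha : a = w <;> by_cases hb : b = w
  · exact absurd (ha ▸ hb ▸ h) H.irrefl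
  · rw [dif_pos ha, dif_neg hb]
    exact graft_adj_inl_inr.mpr ⟨rfl, ha ▸ h⟩
  · rw [dif_neg ha, dif_pos hb]
    exact ((graft_adj_inl_inr (y := ⟨a, ha⟩)).mpr ⟨rfl, hb ▸ h.symm⟩).symm
  · rw [dif_neg ha, dif_neg hb]
    exact graft_adj_inr_inr.mpr h

lemma graft_connected [DecidableEq W] (hG : G.Connected) (hH : H.Connected) :
    (graft G u H w).Connected := by
  have hlhom : ∀ a b : V, G.Adj a b → (graft G u H w).Adj (Sum.inl a) (Sum.inl b) :=
    fun a b h => graft_adj_inl_inl.mpr h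
  have hreachl : ∀ x : V, (graft G u H w).Reachable (Sum.inl x) (Sum.inl u) :=
    fun x => (hG x u).map ⟨Sum.inl, fun h => hlhom _ _ h⟩
  have hreachr : ∀ y : {z : W // z ≠ w},
      (graft G u H w).Reachable (Sum.inl u) (Sum.inr y) := by
    intro y
    have h2 : (graft G u H w).Reachable (toGraft u w w) (toGraft u w y.1) :=
      (hH w y.1).map ⟨toGraft u w, fun h => toGraft_hom (G := G) h⟩
    simpa [toGraft, dif_neg y.2] using h2
  rw [SimpleGraph.connected_iff]
  refine ⟨fun a b => ?_, ⟨Sum.inl u⟩⟩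
  have key : ∀ c, (graft G u H w).Reachable c (Sum.inl u) := by
    rintro (x | y)
    · exact hreachl x
    · exact (hreachr y).symm
  exact (key a).trans (key b).symm

section GraftDist
variable {V W : Type*} {G : SimpleGraph V} {u : V} {H : SimpleGraph W} {w : W}
variable [DecidableEq W]

lemma graft_dist_inl_inl (hG : G.Connected) (hH : H.Connected) (x x' : V) :
    (graft G u H w).dist (Sum.inl x) (Sum.inl x') = G.dist x x' := by
  have hgc := graft_connected (u := u) (w := w) hG hH
  apply le_antisymm
  · exact dist_le_dist_of_almostHom (G := G) (H := graft G u H w) Sum.inl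
      (fun a b h => Or.inr (graft_adj_inl_inl.mpr h)) hgc (hG x x')
  · have h2 := dist_le_dist_of_almostHom (G := graft G u H w) (H := G)
      (Sum.elim id (fun _ => u)) ?_ hG (hgc (Sum.inl x) (Sum.inl x'))
    · simpa using h2
    · rintro (a | a) (b | b) hab
      · exact Or.inr (by simpa using graft_adj_inl_inl.mp hab)
      · obtain ⟨rfl, -⟩ := graft_adj_inl_inr.mp hab
        exact Or.inl (by simp)
      · obtain ⟨rfl, -⟩ := graft_adj_inl_inr.mp hab.symm
        exact Or.inl (by simp)
      · exact Or.inl (by simp)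

lemma graft_proj_W : ∀ a b, (graft G u H w).Adj a b →
    (Sum.elim (fun _ => w) Subtype.val : V ⊕ {z : W // z ≠ w} → W) a =
      Sum.elim (fun _ => w) Subtype.val b ∨
    H.Adj (Sum.elim (fun _ => w) (Subtype.val : {z : W // z ≠ w} → W) a)
      (Sum.elim (fun _ => w) Subtype.val b) := by
  rintro (a | a) (b | b) hab
  · exact Or.inl rfl
  · obtain ⟨rfl, h⟩ := graft_adj_inl_inr.mp hab
    exact Or.inr (by simpa using h)
  · obtain ⟨rfl, h⟩ := graft_adj_inl_inr.mp hab.symm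
    exact Or.inr (by simpa using h.symm)
  · exact Or.inr (by simpa using graft_adj_inr_inr.mp hab)

lemma graft_dist_inr_inr (hG : G.Connected) (hH : H.Connected) (y y' : {z : W // z ≠ w}) :
    (graft G u H w).dist (Sum.inr y) (Sum.inr y') = H.dist y.1 y'.1 := by
  have hgc := graft_connected (u := u) (w := w) hG hH
  apply le_antisymm
  · have h1 := dist_le_dist_of_almostHom (G := H) (H := graft G u H w) (toGraft u w)
      (fun a b h => Or.inr (toGraft_hom (G := G) h)) hgc (hH y.1 y'.1)
    simpa [toGraft, dif_neg y.2, dif_neg y'.2] using h1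
  · have h2 := dist_le_dist_of_almostHom (G := graft G u H w) (H := H)
      (Sum.elim (fun _ => w) Subtype.val) graft_proj_W hH (hgc (Sum.inr y) (Sum.inr y'))
    simpa using h2

lemma graft_dist_inl_inr (hG : G.Connected) (hH : H.Connected) (x : V)
    (y : {z : W // z ≠ w}) :
    (graft G u H w).dist (Sum.inl x) (Sum.inr y) = G.dist x u + H.dist w y.1 := by
  have hgc := graft_connected (u := u) (w := w) hG hH
  apply le_antisymm
  · have t := hgc.dist_triangle (u := Sum.inl x) (v := Sum.inl u) (w := Sum.inr y)
    have h1 : (graft G u H w).dist (Sum.inl x) (Sum.inl u) = G.dist x u :=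
      graft_dist_inl_inl hG hH x u
    have h2 : (graft G u H w).dist (Sum.inl u) (Sum.inr y) ≤ H.dist w y.1 := by
      have h3 := dist_le_dist_of_almostHom (G := H) (H := graft G u H w) (toGraft u w)
        (fun a b h => Or.inr (toGraft_hom (G := G) h)) hgc (hH w y.1)
      simpa [toGraft, dif_neg y.2] using h3
    omega
  · set ψ : (V ⊕ {z : W // z ≠ w}) → ℤ :=
      Sum.elim (fun x => -(G.dist x u : ℤ)) (fun y => (H.dist w y.1 : ℤ)) with hψ
    have hlip : ∀ a b, (graft G u H w).Adj a b → |ψ a - ψ b| ≤ 1 := by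
      have base : ∀ (a : V) (b : {z : W // z ≠ w}),
          (graft G u H w).Adj (Sum.inl a) (Sum.inr b) → |ψ (Sum.inl a) - ψ (Sum.inr b)| ≤ 1 := by
        intro a b hab
        obtain ⟨rfl, h⟩ := graft_adj_inl_inr.mp hab
        have hd : H.dist w b.1 = 1 := SimpleGraph.dist_eq_one_iff_adj.mpr h
        simp [hψ, hd, SimpleGraph.dist_self]
      rintro (a | a) (b | b) hab
      · have h := graft_adj_inl_inl.mp hab
        have hd : G.dist a b = 1 := SimpleGraph.dist_eq_one_iff_adj.mpr h
        have t1 : G.dist a u ≤ G.dist a b + G.dist b u := hG.dist_triangle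
        have t2 : G.dist b u ≤ G.dist b a + G.dist a u := hG.dist_triangle
        rw [SimpleGraph.dist_comm (u := b) (v := a)] at t2
        simp only [hψ, Sum.elim_inl]
        rw [abs_le]
        constructor <;> [skip; skip] <;> push_cast <;> omega
      · exact base a b hab
      · rw [abs_sub_comm]; exact base b a hab.symm
      · have h := graft_adj_inr_inr.mp hab
        have hd : H.dist a.1 b.1 = 1 := SimpleGraph.dist_eq_one_iff_adj.mpr h
        have t1 : H.dist w a.1 ≤ H.dist w b.1 + H.dist b.1 a.1 := hH.dist_triangle
        have t2 : H.dist w b.1 ≤ H.dist w a.1 + H.dist a.1 b.1 := hH.dist_triangle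
        rw [SimpleGraph.dist_comm (u := b.1) (v := a.1)] at t1
        simp only [hψ, Sum.elim_inr]
        rw [abs_le]
        constructor <;> push_cast <;> omega
    have hpot := dist_ge_potential ψ hlip (hgc (Sum.inl x) (Sum.inr y))
    have : |ψ (Sum.inl x) - ψ (Sum.inr y)| = (G.dist x u : ℤ) + H.dist w y.1 := by
      simp only [hψ, Sum.elim_inl, Sum.elim_inr]
      have h0 : (0:ℤ) ≤ (G.dist x u : ℤ) := Int.ofNat_nonneg _
      have h1 : (0:ℤ) ≤ (H.dist w y.1 : ℤ) := Int.ofNat_nonneg _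
      rw [abs_of_nonpos (by omega)]
      ring
    omega

lemma harary_nodiag {α : Type*} [Fintype α] (G : SimpleGraph α) :
    harary G = (∑ a : α, ∑ b : α, (1:ℝ) / (G.dist a b)) / 2 := by
  classical
  unfold harary
  congr 1
  refine Finset.sum_congr rfl fun a _ => Finset.sum_congr rfl fun b _ => ?_
  by_cases h : a = b
  · simp [h, SimpleGraph.dist_self]
  · simp [h]

lemma sum_split {α M : Type*} [AddCommMonoid M] [Fintype α] [DecidableEq α] (w : α) (f : α → M) :
    ∑ z : α, f z = f w + ∑ y : {z : α // z ≠ w}, f y.1 := by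
  classical
  rw [← Finset.sum_subtype (univ.erase w) (fun x => by simp) f]
  exact (Finset.add_sum_erase univ f (mem_univ w)).symm

lemma harary_graft [Fintype V] [Fintype W] [DecidableEq V] (hG : G.Connected) (hH : H.Connected) :
    harary (graft G u H w) = harary G + harary H +
      ∑ x ∈ univ.erase u, ∑ y : {z : W // z ≠ w},
        1 / ((G.dist x u : ℝ) + (H.dist w y.1 : ℝ)) := by
  classical
  set S := {z : W // z ≠ w}
  set C : ℝ := ∑ x ∈ univ.erase u, ∑ y : S, 1 / ((G.dist x u : ℝ) + (H.dist w y.1 : ℝ))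
    with hC
  set Sw : ℝ := ∑ y : S, (1:ℝ) / (H.dist w y.1) with hSw
  set AS : ℝ := ∑ y : S, ∑ y' : S, (1:ℝ) / (H.dist y.1 y'.1) with hAS
  rw [harary_nodiag, harary_nodiag, harary_nodiag]
  have hcross : ∀ (x : V) (y : S),
      ((graft G u H w).dist (Sum.inl x) (Sum.inr y) : ℝ) =
        ((G.dist x u : ℝ) + (H.dist w y.1 : ℝ)) := by
    intro x y
    rw [graft_dist_inl_inr hG hH]
    push_cast; ring
  have F2 : ∑ x : V, ∑ y : S, (1:ℝ) / ((graft G u H w).dist (Sum.inl x) (Sum.inr y))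
      = C + Sw := by
    rw [← Finset.add_sum_erase univ _ (mem_univ u)]
    have h1 : ∑ y : S, (1:ℝ) / ((graft G u H w).dist (Sum.inl u) (Sum.inr y)) = Sw := by
      refine Finset.sum_congr rfl fun y _ => ?_
      rw [hcross u y, SimpleGraph.dist_self]
      norm_num
    have h2 : ∑ x ∈ univ.erase u, ∑ y : S,
        (1:ℝ) / ((graft G u H w).dist (Sum.inl x) (Sum.inr y)) = C := by
      refine Finset.sum_congr rfl fun x _ => Finset.sum_congr rfl fun y _ => ?_
      rw [hcross x y]
    rw [h1, h2]
    ring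
  have F3 : ∑ y : S, ∑ x : V, (1:ℝ) / ((graft G u H w).dist (Sum.inr y) (Sum.inl x))
      = C + Sw := by
    rw [← F2, Finset.sum_comm]
    refine Finset.sum_congr rfl fun x _ => Finset.sum_congr rfl fun y _ => ?_
    rw [SimpleGraph.dist_comm]
  have F1 : ∑ x : V, ∑ x' : V, (1:ℝ) / ((graft G u H w).dist (Sum.inl x) (Sum.inl x'))
      = ∑ x : V, ∑ x' : V, (1:ℝ) / (G.dist x x') := by
    refine Finset.sum_congr rfl fun x _ => Finset.sum_congr rfl fun x' _ => ?_
    rw [graft_dist_inl_inl hG hH]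
  have F4 : ∑ y : S, ∑ y' : S, (1:ℝ) / ((graft G u H w).dist (Sum.inr y) (Sum.inr y'))
      = AS := by
    refine Finset.sum_congr rfl fun y _ => Finset.sum_congr rfl fun y' _ => ?_
    rw [graft_dist_inr_inr hG hH]
  have F5 : ∑ z : W, ∑ z' : W, (1:ℝ) / (H.dist z z') = AS + 2 * Sw := by
    rw [sum_split w (fun z => ∑ z' : W, (1:ℝ) / (H.dist z z'))]
    have hrow : ∀ z : W, ∑ z' : W, (1:ℝ) / (H.dist z z')
        = (1:ℝ) / (H.dist z w) + ∑ y' : S, (1:ℝ) / (H.dist z y'.1) := by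
      intro z
      exact sum_split w (fun z' => (1:ℝ) / (H.dist z z'))
    rw [hrow w]
    have : ∑ y : S, ∑ z' : W, (1:ℝ) / (H.dist y.1 z') =
        (∑ y : S, (1:ℝ) / (H.dist y.1 w)) + AS := by
      rw [← Finset.sum_add_distrib]
      exact Finset.sum_congr rfl fun y _ => hrow y.1
    rw [this]
    have e1 : ∑ y : S, (1:ℝ) / (H.dist y.1 w) = Sw := by
      refine Finset.sum_congr rfl fun y _ => ?_
      rw [SimpleGraph.dist_comm]
    rw [e1]
    have hSw' : ∑ y' : S, (1:ℝ) / (H.dist w y'.1) = Sw := hSw.symm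
    rw [hSw', SimpleGraph.dist_self]
    norm_num
    ring
  rw [Fintype.sum_sum_type]
  simp only [Fintype.sum_sum_type]
  rw [Finset.sum_add_distrib, Finset.sum_add_distrib, F1, F2, F3, F4, F5]
  ring

end GraftDist

section Counts
variable {α : Type*} [Fintype α]

noncomputable def pairCount [DecidableEq α] (G : SimpleGraph α) (ℓ : ℕ) : ℕ :=
  (univ.offDiag.filter (fun p : α × α => G.dist p.1 p.2 ≤ ℓ)).card

noncomputable def ballCount [DecidableEq α] (G : SimpleGraph α) (w : α) (ℓ : ℕ) : ℕ :=
  (univ.filter (fun y => y ≠ w ∧ G.dist w y ≤ ℓ)).card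

lemma harary_offDiag [DecidableEq α] (G : SimpleGraph α) :
    harary G = (∑ p ∈ univ.offDiag, (1:ℝ) / (G.dist p.1 p.2)) / 2 := by
  classical
  rw [harary_nodiag]
  congr 1
  rw [← Finset.sum_product']
  rw [← Finset.diag_union_offDiag (univ : Finset α),
    Finset.sum_union (Finset.disjoint_diag_offDiag _)]
  have : ∑ p ∈ (univ : Finset α).diag, (1:ℝ) / (G.dist p.1 p.2) = 0 := by
    refine Finset.sum_eq_zero fun p hp => ?_
    have := (Finset.mem_diag.mp hp).2
    rw [this, SimpleGraph.dist_self]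
    norm_num
  rw [this, zero_add]

lemma ballCount_subtype [DecidableEq α] (G : SimpleGraph α) (w : α) (ℓ : ℕ) :
    ((univ : Finset {z : α // z ≠ w}).filter (fun y => G.dist w y.1 ≤ ℓ)).card
      = ballCount G w ℓ := by
  unfold ballCount
  refine Finset.card_bij (fun y _ => y.1) ?_ ?_ ?_
  · intro y hy
    simp only [Finset.mem_filter, Finset.mem_univ, true_and] at hy ⊢
    exact ⟨y.2, hy⟩
  · intro a ha b hb hab
    exact Subtype.ext hab
  · intro b hb
    simp only [Finset.mem_filter, Finset.mem_univ, true_and] at hb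
    exact ⟨⟨b, hb.1⟩, by simp [hb.2], rfl⟩

lemma card_subtype_ne [DecidableEq α] (w : α) :
    Fintype.card {z : α // z ≠ w} = Fintype.card α - 1 := by
  rw [Fintype.card_subtype]
  have : (univ.filter (fun z : α => z ≠ w)) = univ.erase w := by
    ext z; simp [Finset.mem_erase, and_comm]
  rw [this, Finset.card_erase_of_mem (mem_univ w), Finset.card_univ]

end Counts

section Master
open Classical in
theorem harary_graft_lt {V W₁ W₂ : Type*} [Fintype V] [Fintype W₁] [Fintype W₂]
    [DecidableEq W₁] [DecidableEq W₂]
    {G : SimpleGraph V} (hG : G.Connected) (u : V)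
    {H₁ : SimpleGraph W₁} (h1 : H₁.Connected) (w₁ : W₁)
    {H₂ : SimpleGraph W₂} (h2 : H₂.Connected) (w₂ : W₂)
    {k : ℕ} (hk : 2 ≤ k) (hc1 : Fintype.card W₁ = k) (hc2 : Fintype.card W₂ = k)
    (hpair : ∀ ℓ, 1 ≤ ℓ → ℓ < k - 1 → pairCount H₁ ℓ ≤ pairCount H₂ ℓ)
    (hstrict : ∃ ℓ, 1 ≤ ℓ ∧ ℓ < k - 1 ∧ pairCount H₁ ℓ < pairCount H₂ ℓ)
    (hball : ∀ ℓ, 1 ≤ ℓ → ℓ < k - 1 → ballCount H₁ w₁ ℓ ≤ ballCount H₂ w₂ ℓ) :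
    harary (graft G u H₁ w₁) < harary (graft G u H₂ w₂) := by
  classical
  rw [harary_graft hG h1, harary_graft hG h2]
  have bound1 : ∀ p : W₁ × W₁, p ∈ (univ : Finset W₁).offDiag →
      1 ≤ H₁.dist p.1 p.2 ∧ H₁.dist p.1 p.2 ≤ k - 1 := by
    intro p hp
    obtain ⟨-, -, hne⟩ := Finset.mem_offDiag.mp hp
    exact ⟨h1.pos_dist_of_ne hne, hc1 ▸ dist_le_card h1 p.1 p.2⟩
  have bound2 : ∀ p : W₂ × W₂, p ∈ (univ : Finset W₂).offDiag →
      1 ≤ H₂.dist p.1 p.2 ∧ H₂.dist p.1 p.2 ≤ k - 1 := by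
    intro p hp
    obtain ⟨-, -, hne⟩ := Finset.mem_offDiag.mp hp
    exact ⟨h2.pos_dist_of_ne hne, hc2 ▸ dist_le_card h2 p.1 p.2⟩
  have hcards : ((univ : Finset W₁).offDiag).card = ((univ : Finset W₂).offDiag).card := by
    rw [Finset.offDiag_card, Finset.offDiag_card, Finset.card_univ, Finset.card_univ, hc1, hc2]
  -- harary part
  have hH : harary H₁ < harary H₂ := by
    rw [harary_offDiag, harary_offDiag]
    have := abel_lt (univ.offDiag) (univ.offDiag)
      (fun p : W₁ × W₁ => H₁.dist p.1 p.2) (fun p : W₂ × W₂ => H₂.dist p.1 p.2)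
      (fun t => (1:ℝ) / t) (k - 1) hcards bound1 bound2
      (fun ℓ hℓ1 hℓ2 => by
        apply one_div_lt_one_div_of_lt
        · exact_mod_cast hℓ1
        · exact_mod_cast Nat.lt_succ_self ℓ)
      (fun ℓ hℓ1 hℓ2 => by beta_reduce; exact hpair ℓ hℓ1 hℓ2)
      (by obtain ⟨ℓ, hl1, hl2, hl3⟩ := hstrict; exact ⟨ℓ, hl1, hl2, by beta_reduce; exact hl3⟩)
    beta_reduce at this
    linarith
  -- cross part
  have hcross : ∀ x : V, x ∈ univ.erase u →
      (∑ y : {z : W₁ // z ≠ w₁}, 1 / ((G.dist x u : ℝ) + (H₁.dist w₁ y.1 : ℝ)))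
        ≤ ∑ y : {z : W₂ // z ≠ w₂}, 1 / ((G.dist x u : ℝ) + (H₂.dist w₂ y.1 : ℝ)) := by
    intro x hx
    have hb1 : ∀ y : {z : W₁ // z ≠ w₁}, y ∈ (univ : Finset _) →
        1 ≤ H₁.dist w₁ y.1 ∧ H₁.dist w₁ y.1 ≤ k - 1 := fun y _ =>
      ⟨h1.pos_dist_of_ne (Ne.symm y.2), hc1 ▸ dist_le_card h1 w₁ y.1⟩
    have hb2 : ∀ y : {z : W₂ // z ≠ w₂}, y ∈ (univ : Finset _) →
        1 ≤ H₂.dist w₂ y.1 ∧ H₂.dist w₂ y.1 ≤ k - 1 := fun y _ =>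
      ⟨h2.pos_dist_of_ne (Ne.symm y.2), hc2 ▸ dist_le_card h2 w₂ y.1⟩
    have hcard : (univ : Finset {z : W₁ // z ≠ w₁}).card
        = (univ : Finset {z : W₂ // z ≠ w₂}).card := by
      rw [Finset.card_univ, Finset.card_univ, card_subtype_ne, card_subtype_ne, hc1, hc2]
    have ha : (0:ℝ) ≤ (G.dist x u : ℝ) := Nat.cast_nonneg _
    have := abel_le (univ : Finset {z : W₁ // z ≠ w₁}) (univ : Finset {z : W₂ // z ≠ w₂})
      (fun y => H₁.dist w₁ y.1) (fun y => H₂.dist w₂ y.1)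
      (fun t => 1 / ((G.dist x u : ℝ) + t)) (k - 1) hcard hb1 hb2
      (fun ℓ hℓ1 hℓ2 => by
        apply one_div_le_one_div_of_le
        · have : (1:ℝ) ≤ (ℓ:ℝ) := by exact_mod_cast hℓ1
          linarith
        · push_cast; linarith)
      (fun ℓ hℓ1 hℓ2 => by
        beta_reduce
        rw [ballCount_subtype, ballCount_subtype]
        exact hball ℓ hℓ1 hℓ2)
    convert this using 2 <;> push_cast <;> ring
  have := Finset.sum_le_sum hcross
  linarith
end Master

section PathStar

lemma pathG_adj {n : ℕ} {i j : Fin n} :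
    (pathG n).Adj i j ↔ (j : ℕ) = (i : ℕ) + 1 ∨ (i : ℕ) = (j : ℕ) + 1 := by
  simp only [pathG, SimpleGraph.fromRel_adj]
  constructor
  · rintro ⟨-, h | h⟩
    · exact Or.inl h
    · exact Or.inr h
  · intro h
    exact ⟨fun he => by subst he; omega, h⟩

lemma starG_adj {n : ℕ} {i j : Fin n} :
    (starG n).Adj i j ↔ (((i : ℕ) = 0 ∧ (j : ℕ) ≠ 0) ∨ ((j : ℕ) = 0 ∧ (i : ℕ) ≠ 0)) := by
  simp only [starG, SimpleGraph.fromRel_adj]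
  constructor
  · rintro ⟨-, h | h⟩
    · exact Or.inl h
    · exact Or.inr h
  · intro h
    refine ⟨fun he => by subst he; omega, ?_⟩
    rcases h with h | h
    · exact Or.inl h
    · exact Or.inr h

lemma path_walk {n : ℕ} : ∀ (m : ℕ) (i j : Fin n), (j : ℕ) = (i : ℕ) + m →
    ∃ p : (pathG n).Walk i j, p.length = m := by
  intro m
  induction m with
  | zero =>
    intro i j h
    have : i = j := Fin.ext (by omega)
    subst this
    exact ⟨SimpleGraph.Walk.nil, rfl⟩
  | succ m ih =>
    intro i j h
    have hi1 : (i : ℕ) + 1 < n := by have := j.isLt; omega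
    have hadj : (pathG n).Adj i ⟨(i : ℕ) + 1, hi1⟩ := pathG_adj.mpr (Or.inl rfl)
    obtain ⟨p, hp⟩ := ih ⟨(i : ℕ) + 1, hi1⟩ j (by simp; omega)
    exact ⟨SimpleGraph.Walk.cons hadj p, by simp [hp]⟩

lemma pathG_connected {n : ℕ} (hn : 0 < n) : (pathG n).Connected := by
  rw [SimpleGraph.connected_iff]
  refine ⟨fun i j => ?_, ⟨⟨0, hn⟩⟩⟩
  rcases le_total (i : ℕ) (j : ℕ) with h | h
  · obtain ⟨p, -⟩ := path_walk ((j : ℕ) - (i : ℕ)) i j (by omega)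
    exact ⟨p⟩
  · obtain ⟨p, -⟩ := path_walk ((i : ℕ) - (j : ℕ)) j i (by omega)
    exact ⟨p.reverse⟩

lemma pathG_dist {n : ℕ} (i j : Fin n) :
    (pathG n).dist i j = max (i : ℕ) (j : ℕ) - min (i : ℕ) (j : ℕ) := by
  have hψ : ∀ a b : Fin n, (pathG n).Adj a b → |((a : ℕ) : ℤ) - ((b : ℕ) : ℤ)| ≤ 1 := by
    intro a b hab
    rcases pathG_adj.mp hab with h | h <;> rw [abs_le] <;> constructor <;> push_cast <;> omega
  have hn : 0 < n := i.pos
  have lower := dist_ge_potential (fun a : Fin n => ((a : ℕ) : ℤ)) hψ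
    ((pathG_connected hn) i j)
  apply le_antisymm
  · rcases le_total (i : ℕ) (j : ℕ) with h | h
    · obtain ⟨p, hp⟩ := path_walk ((j : ℕ) - (i : ℕ)) i j (by omega)
      have := SimpleGraph.dist_le p
      omega
    · obtain ⟨p, hp⟩ := path_walk ((i : ℕ) - (j : ℕ)) j i (by omega)
      have := SimpleGraph.dist_le p.reverse
      rw [SimpleGraph.Walk.length_reverse] at this
      omega
  · have lower' : |((i : ℕ) : ℤ) - ((j : ℕ) : ℤ)| ≤ ((pathG n).dist i j : ℤ) := lower
    rcases le_total (i : ℕ) (j : ℕ) with h | h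
    · rw [abs_of_nonpos (by push_cast; omega)] at lower'
      omega
    · rw [abs_of_nonneg (by push_cast; omega)] at lower'
      omega

lemma starG_connected {n : ℕ} (hn : 2 ≤ n) : (starG n).Connected := by
  rw [SimpleGraph.connected_iff]
  have h0 : (0 : ℕ) < n := by omega
  refine ⟨fun i j => ?_, ⟨⟨0, h0⟩⟩⟩
  have key : ∀ i : Fin n, (starG n).Reachable i ⟨0, h0⟩ := by
    intro i
    by_cases hi : (i : ℕ) = 0
    · have : i = ⟨0, h0⟩ := Fin.ext (by simpa using hi)
      rw [this]
    · exact (starG_adj.mpr (Or.inr ⟨rfl, hi⟩)).reachable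
  exact (key i).trans (key j).symm

lemma starG_dist_zero {n : ℕ} (hn : 2 ≤ n) {j : Fin n} (hj : (j : ℕ) ≠ 0) :
    (starG n).dist ⟨0, by omega⟩ j = 1 :=
  SimpleGraph.dist_eq_one_iff_adj.mpr (starG_adj.mpr (Or.inl ⟨rfl, hj⟩))

lemma starG_dist_le_two {n : ℕ} (hn : 2 ≤ n) (i j : Fin n) :
    (starG n).dist i j ≤ 2 := by
  have h0 : (0:ℕ) < n := by omega
  by_cases hi : (i : ℕ) = 0
  · by_cases hj : (j : ℕ) = 0
    · have : i = j := Fin.ext (by omega)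
      rw [this, SimpleGraph.dist_self]; omega
    · have : i = ⟨0, h0⟩ := Fin.ext hi
      rw [this, starG_dist_zero hn hj]; omega
  · by_cases hj : (j : ℕ) = 0
    · have : j = ⟨0, h0⟩ := Fin.ext hj
      rw [this, SimpleGraph.dist_comm, starG_dist_zero hn hi]; omega
    · calc (starG n).dist i j ≤ (starG n).dist i ⟨0, h0⟩ + (starG n).dist ⟨0, h0⟩ j :=
          (starG_connected hn).dist_triangle
        _ ≤ 2 := by
            rw [SimpleGraph.dist_comm (u := i), starG_dist_zero hn hi, starG_dist_zero hn hj]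


end PathStar

section PSCounts

noncomputable def farCount {α : Type*} [Fintype α] [DecidableEq α]
    (G : SimpleGraph α) (ℓ : ℕ) : ℕ :=
  (univ.offDiag.filter (fun p : α × α => ℓ + 1 ≤ G.dist p.1 p.2)).card

lemma pair_far {α : Type*} [Fintype α] [DecidableEq α] (G : SimpleGraph α) (ℓ : ℕ) :
    pairCount G ℓ + farCount G ℓ = Fintype.card α * Fintype.card α - Fintype.card α := by
  unfold pairCount farCount
  have h1 : (univ.offDiag.filter (fun p : α × α => ℓ + 1 ≤ G.dist p.1 p.2))
      = (univ.offDiag.filter (fun p : α × α => ¬ G.dist p.1 p.2 ≤ ℓ)) :=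
    Finset.filter_congr (fun p _ => by omega)
  rw [h1, Finset.card_filter_add_card_filter_not, Finset.offDiag_card,
    Finset.card_univ]

lemma ballCount_path_le {n : ℕ} (hn : 0 < n) (ℓ : ℕ) :
    ballCount (pathG n) ⟨0, hn⟩ ℓ ≤ min ℓ (n - 1) := by
  unfold ballCount
  have key : ∀ y : Fin n, y ∈ univ.filter (fun y => y ≠ ⟨0, hn⟩ ∧ (pathG n).dist ⟨0, hn⟩ y ≤ ℓ) →
      (y : ℕ) ∈ Finset.Icc 1 (min ℓ (n - 1)) := by
    intro y hy
    simp only [Finset.mem_filter, Finset.mem_univ, true_and] at hy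
    obtain ⟨hy1, hy2⟩ := hy
    rw [pathG_dist] at hy2
    simp only [Finset.mem_Icc]
    have h1 : (y : ℕ) ≠ 0 := fun h => hy1 (Fin.ext h)
    have := y.isLt
    simp at hy2
    omega
  calc (univ.filter (fun y => y ≠ (⟨0, hn⟩ : Fin n) ∧ (pathG n).dist ⟨0, hn⟩ y ≤ ℓ)).card
      ≤ (Finset.Icc 1 (min ℓ (n - 1))).card :=
        Finset.card_le_card_of_injOn Fin.val key (fun a _ b _ hab => Fin.ext hab)
    _ = min ℓ (n - 1) := by rw [Nat.card_Icc]; omega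

lemma farCount_path_ge {n ℓ : ℕ} (hℓ : 1 ≤ ℓ) (hn : 0 < n) :
    (n - ℓ) * (n - ℓ - 1) ≤ farCount (pathG n) ℓ := by
  unfold farCount
  set f : ℕ × ℕ → Fin n × Fin n := fun q =>
    if q.1 < q.2 then (⟨q.1 % n, Nat.mod_lt _ hn⟩, ⟨(q.2 + ℓ) % n, Nat.mod_lt _ hn⟩)
    else (⟨(q.1 + ℓ) % n, Nat.mod_lt _ hn⟩, ⟨q.2 % n, Nat.mod_lt _ hn⟩) with hf
  have key : ∀ c : ℕ × ℕ, c.1 < n - ℓ → c.2 < n - ℓ →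
      (((f c).1 : ℕ), ((f c).2 : ℕ)) =
        if c.1 < c.2 then (c.1, c.2 + ℓ) else (c.1 + ℓ, c.2) := by
    intro c hc1 hc2
    rw [hf]
    by_cases h : c.1 < c.2
    · simp only [if_pos h]
      rw [Nat.mod_eq_of_lt (by omega), Nat.mod_eq_of_lt (by omega)]
    · simp only [if_neg h]
      rw [Nat.mod_eq_of_lt (by omega), Nat.mod_eq_of_lt (by omega)]
  have hmem : ∀ q ∈ (Finset.range (n - ℓ)).offDiag,
      f q ∈ univ.offDiag.filter (fun p : Fin n × Fin n => ℓ + 1 ≤ (pathG n).dist p.1 p.2) := by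
    intro q hq
    obtain ⟨hq1, hq2, hne⟩ := Finset.mem_offDiag.mp hq
    rw [Finset.mem_range] at hq1 hq2
    have hk := key q hq1 hq2
    refine Finset.mem_filter.mpr ⟨Finset.mem_offDiag.mpr ⟨mem_univ _, mem_univ _,
      fun he => ?_⟩, ?_⟩
    · have hv : ((f q).1 : ℕ) = ((f q).2 : ℕ) := congrArg Fin.val he
      by_cases h : q.1 < q.2 <;> simp only [if_pos, if_neg, h, if_true, if_false,
        Prod.mk.injEq] at hk <;> omega
    · rw [pathG_dist]
      by_cases h : q.1 < q.2 <;> simp only [if_pos, if_neg, h, if_true, if_false,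
        Prod.mk.injEq] at hk <;> omega
  have hinj : Set.InjOn f ((Finset.range (n - ℓ)).offDiag : Set (ℕ × ℕ)) := by
    intro a ha b hb hab
    rw [Finset.mem_coe, Finset.mem_offDiag] at ha hb
    obtain ⟨ha1, ha2, -⟩ := ha
    obtain ⟨hb1, hb2, -⟩ := hb
    rw [Finset.mem_range] at ha1 ha2 hb1 hb2
    have ea := key a ha1 ha2
    have eb := key b hb1 hb2
    rw [hab] at ea
    have hcomb : (if a.1 < a.2 then (a.1, a.2 + ℓ) else (a.1 + ℓ, a.2))
        = (if b.1 < b.2 then (b.1, b.2 + ℓ) else (b.1 + ℓ, b.2)) := by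
      rw [← ea, ← eb]
    split_ifs at hcomb <;>
      (rw [Prod.mk.injEq] at hcomb
       exact Prod.ext (by omega) (by omega))
  have hsq : ∀ m : ℕ, m * m - m = m * (m - 1) := by
    intro m
    cases m with
    | zero => simp
    | succ s =>
      simp only [Nat.succ_sub_one]
      have : (s+1)*(s+1) = (s+1)*s + (s+1) := by ring
      omega
  calc (n - ℓ) * (n - ℓ - 1)
      = ((Finset.range (n - ℓ)).offDiag).card := by
        rw [Finset.offDiag_card, Finset.card_range, hsq]
    _ ≤ _ := Finset.card_le_card_of_injOn f hmem hinj

end PSCounts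

section DegreeCounts
variable {α : Type*} [Fintype α] [DecidableEq α]

lemma pairCount_one_eq (G : SimpleGraph α) [DecidableRel G.Adj] (hG : G.Connected) :
    pairCount G 1 = ∑ v : α, G.degree v := by
  unfold pairCount
  have hset : univ.offDiag.filter (fun p : α × α => G.dist p.1 p.2 ≤ 1)
      = (univ ×ˢ univ).filter (fun p : α × α => G.Adj p.1 p.2) := by
    ext p
    simp only [Finset.mem_filter, Finset.mem_offDiag, Finset.mem_product, Finset.mem_univ,
      true_and]
    constructor
    · rintro ⟨hne, hd⟩
      have : G.dist p.1 p.2 = 1 := le_antisymm hd (hG.pos_dist_of_ne hne)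
      exact SimpleGraph.dist_eq_one_iff_adj.mp this
    · intro h
      exact ⟨h.ne, le_of_eq (SimpleGraph.dist_eq_one_iff_adj.mpr h)⟩
  rw [hset, Finset.card_filter, Finset.sum_product]
  refine Finset.sum_congr rfl fun a _ => ?_
  rw [← Finset.card_filter]
  congr 1
  exact (SimpleGraph.neighborFinset_eq_filter (G := G)).symm

open Classical in
lemma pairCount_tree_one {k : ℕ} (T : SimpleGraph α) (hT : T.IsTree)
    (hc : Fintype.card α = k) : pairCount T 1 = 2 * (k - 1) := by
  classical
  rw [pairCount_one_eq T hT.isConnected, SimpleGraph.sum_degrees_eq_twice_card_edges]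
  have h2 := hT.card_edgeFinset
  have hpos : 1 ≤ Fintype.card α := by
    have := hT.isConnected.nonempty
    exact Fintype.card_pos
  omega

lemma pairCount_le_max (G : SimpleGraph α) (ℓ : ℕ) :
    pairCount G ℓ ≤ Fintype.card α * Fintype.card α - Fintype.card α := by
  unfold pairCount
  calc _ ≤ univ.offDiag.card := Finset.card_filter_le _ _
    _ = _ := by rw [Finset.offDiag_card, Finset.card_univ]

lemma pairCount_lt_max (G : SimpleGraph α) {ℓ : ℕ} {a b : α}
    (hab : ℓ + 1 ≤ G.dist a b) :
    pairCount G ℓ < Fintype.card α * Fintype.card α - Fintype.card α := by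
  have hne : a ≠ b := by
    intro h
    rw [h, SimpleGraph.dist_self] at hab
    omega
  have hfar : 0 < farCount G ℓ := by
    unfold farCount
    rw [Finset.card_pos]
    exact ⟨(a, b), Finset.mem_filter.mpr
      ⟨Finset.mem_offDiag.mpr ⟨mem_univ _, mem_univ _, hne⟩, hab⟩⟩
  have := pair_far G ℓ
  omega

lemma ballCount_le_max (G : SimpleGraph α) (w : α) (ℓ : ℕ) :
    ballCount G w ℓ ≤ Fintype.card α - 1 := by
  unfold ballCount
  calc (univ.filter (fun y => y ≠ w ∧ G.dist w y ≤ ℓ)).card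
      ≤ (univ.erase w).card := by
        apply Finset.card_le_card
        intro y hy
        simp only [Finset.mem_filter, Finset.mem_univ, true_and] at hy
        exact Finset.mem_erase.mpr ⟨hy.1, mem_univ _⟩
    _ = Fintype.card α - 1 := by rw [Finset.card_erase_of_mem (mem_univ w), Finset.card_univ]

lemma pairCount_star_big {k ℓ : ℕ} (hk : 2 ≤ k) (hℓ : 2 ≤ ℓ) :
    pairCount (starG k) ℓ = k * k - k := by
  unfold pairCount
  have h : univ.offDiag.filter (fun p : Fin k × Fin k => (starG k).dist p.1 p.2 ≤ ℓ)
      = univ.offDiag := by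
    apply Finset.filter_true_of_mem
    intro p _
    exact le_trans (starG_dist_le_two hk p.1 p.2) hℓ
  rw [h, Finset.offDiag_card, Finset.card_univ, Fintype.card_fin]

lemma ballCount_star {k ℓ : ℕ} (hk : 2 ≤ k) (hℓ : 1 ≤ ℓ) :
    ballCount (starG k) (⟨0, by omega⟩ : Fin k) ℓ = k - 1 := by
  unfold ballCount
  have h0 : (0:ℕ) < k := by omega
  have h : univ.filter (fun y : Fin k => y ≠ ⟨0, h0⟩ ∧ (starG k).dist ⟨0, h0⟩ y ≤ ℓ)
      = univ.erase ⟨0, h0⟩ := by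
    ext y
    simp only [Finset.mem_filter, Finset.mem_univ, true_and, Finset.mem_erase, and_true]
    constructor
    · exact fun h => h.1
    · intro hy
      refine ⟨hy, ?_⟩
      have : (y : ℕ) ≠ 0 := fun h => hy (Fin.ext h)
      rw [starG_dist_zero hk this]
      omega
  rw [h, Finset.card_erase_of_mem (mem_univ _), Finset.card_univ, Fintype.card_fin]

open Classical in
lemma pairCount_star_one {k : ℕ} (hk : 2 ≤ k) : pairCount (starG k) 1 = 2 * (k - 1) := by
  classical
  have h0 : (0:ℕ) < k := by omega
  rw [pairCount_one_eq _ (starG_connected hk)]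
  rw [sum_split (⟨0, h0⟩ : Fin k)]
  have hdeg0 : (starG k).degree ⟨0, h0⟩ = k - 1 := by
    unfold SimpleGraph.degree
    have : (starG k).neighborFinset ⟨0, h0⟩ = univ.erase ⟨0, h0⟩ := by
      ext y
      rw [SimpleGraph.mem_neighborFinset, Finset.mem_erase, starG_adj]
      constructor
      · rintro (⟨-, h⟩ | ⟨h1, h2⟩)
        · exact ⟨fun he => h (by rw [he]), mem_univ _⟩
        · exact absurd rfl h2
      · rintro ⟨hy, -⟩
        exact Or.inl ⟨rfl, fun h => hy (Fin.ext h)⟩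
    rw [this, Finset.card_erase_of_mem (mem_univ _), Finset.card_univ, Fintype.card_fin]
  have hdeg1 : ∀ y : {z : Fin k // z ≠ ⟨0, h0⟩}, (starG k).degree y.1 = 1 := by
    intro y
    unfold SimpleGraph.degree
    have hyne : (y.1 : ℕ) ≠ 0 := fun h => y.2 (Fin.ext h)
    have : (starG k).neighborFinset y.1 = {(⟨0, h0⟩ : Fin k)} := by
      ext z
      rw [SimpleGraph.mem_neighborFinset, Finset.mem_singleton, starG_adj]
      constructor
      · rintro (⟨h1, -⟩ | ⟨h1, -⟩)
        · exact absurd h1 hyne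
        · exact Fin.ext h1
      · intro hz
        exact Or.inr ⟨by rw [hz], hyne⟩
    rw [this, Finset.card_singleton]
  rw [hdeg0]
  have : ∑ y : {z : Fin k // z ≠ ⟨0, h0⟩}, (starG k).degree y.1
      = ∑ _y : {z : Fin k // z ≠ ⟨0, h0⟩}, 1 :=
    Finset.sum_congr rfl fun y _ => hdeg1 y
  rw [this, Finset.sum_const, smul_eq_mul, mul_one, Finset.card_univ, card_subtype_ne,
    Fintype.card_fin]
  omega

end DegreeCounts

section Trees
universe u_99
variable {α : Type*}


/-- a connected graph on ≥ 2 vertices has everywhere positive degree -/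
lemma degree_pos_of_connected [Fintype α] {G : SimpleGraph α} [DecidableRel G.Adj]
    (hG : G.Connected) (h2 : 2 ≤ Fintype.card α) (v : α) : 0 < G.degree v := by
  obtain ⟨y, hy⟩ := Fintype.exists_ne_of_one_lt_card (by omega) v
  obtain ⟨p⟩ := hG v y
  cases p with
  | nil => exact absurd rfl (Ne.symm hy)
  | cons h q =>
    rw [← SimpleGraph.card_neighborFinset_eq_degree, Finset.card_pos]
    exact ⟨_, SimpleGraph.mem_neighborFinset _ _ _ |>.mpr h⟩

/-- a tree on at least 2 vertices has a leaf -/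
lemma tree_exists_leaf [Fintype α] {T : SimpleGraph α} [DecidableRel T.Adj]
    (hT : T.IsTree) (h2 : 2 ≤ Fintype.card α) :
    ∃ (x n0 : α), ∀ y, T.Adj x y ↔ y = n0 := by
  classical
  have hedge := hT.card_edgeFinset
  have hsum := SimpleGraph.sum_degrees_eq_twice_card_edges T
  by_contra hno
  push_neg at hno
  have hdeg2 : ∀ v : α, 2 ≤ T.degree v := by
    intro v
    have hpos := degree_pos_of_connected hT.isConnected h2 v
    by_contra hlt
    push_neg at hlt
    have hdeg1 : T.degree v = 1 := by omega
    rw [← SimpleGraph.card_neighborFinset_eq_degree, Finset.card_eq_one] at hdeg1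
    obtain ⟨n0, hn0⟩ := hdeg1
    obtain ⟨y, hy⟩ := hno v n0
    rcases hy with ⟨hy1, hy2⟩ | ⟨hy1, hy2⟩
    · apply hy2
      have hmem : y ∈ T.neighborFinset v := (SimpleGraph.mem_neighborFinset _ _ _).mpr hy1
      rw [hn0, Finset.mem_singleton] at hmem
      exact hmem
    · subst hy2
      exact hy1 ((SimpleGraph.mem_neighborFinset _ _ _).mp
        (hn0 ▸ Finset.mem_singleton_self y))
  have : 2 * Fintype.card α ≤ ∑ v : α, T.degree v := by
    calc 2 * Fintype.card α = ∑ _v : α, 2 := by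
          rw [Finset.sum_const, Finset.card_univ, smul_eq_mul, mul_comm]
      _ ≤ _ := Finset.sum_le_sum fun v _ => hdeg2 v
  omega

/-- an interior vertex of a path has two distinct neighbors -/
lemma interior_two_neighbors {G : SimpleGraph α} {x : α} :
    ∀ {a b : α} (p : G.Walk a b), p.IsPath → x ∈ p.support → x ≠ a → x ≠ b →
    ∃ y z, y ≠ z ∧ G.Adj x y ∧ G.Adj x z := by
  intro a b p
  induction p with
  | nil =>
    intro _ hx hxa _
    rw [SimpleGraph.Walk.support_nil, List.mem_singleton] at hx
    exact absurd hx hxa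
  | cons h q ih =>
    rename_i c d e
    intro hp hx hxa hxb
    rw [SimpleGraph.Walk.support_cons, List.mem_cons] at hx
    rcases hx with hx | hx
    · exact absurd hx hxa
    · by_cases hxd : x = d
      · subst hxd
        cases q with
        | nil => exact absurd rfl hxb
        | cons h2 q2 =>
          rename_i f
          refine ⟨c, f, ?_, h.symm, h2⟩
          intro hcf
          have hq : c ∉ (SimpleGraph.Walk.cons h2 q2).support :=
            (SimpleGraph.Walk.cons_isPath_iff _ _ |>.mp hp).2
          apply hq
          rw [SimpleGraph.Walk.support_cons, hcf]
          right
          exact SimpleGraph.Walk.start_mem_support q2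
      · exact ih (hp.of_cons) hx hxd hxb

/-- lifting a walk avoiding `x` to the complement-subtype graph -/
lemma walk_avoid {G : SimpleGraph α} {x : α} :
    ∀ {av bv : α} (p : G.Walk av bv), x ∉ p.support →
    ∀ (ha : av ≠ x) (hb : bv ≠ x),
    ∃ q : (G.comap (Subtype.val : {y : α // y ≠ x} → α)).Walk ⟨av, ha⟩ ⟨bv, hb⟩,
      q.length = p.length := by
  intro av bv p
  induction p with
  | nil =>
    intro _ ha hb
    exact ⟨SimpleGraph.Walk.nil, rfl⟩
  | cons h q ih =>
    rename_i c d e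
    intro hsup ha hb
    have hvx : d ≠ x := by
      intro he
      apply hsup
      rw [SimpleGraph.Walk.support_cons]
      exact List.mem_cons_of_mem _ (he ▸ SimpleGraph.Walk.start_mem_support q)
    obtain ⟨q', hq'⟩ := ih (fun hm => hsup (by
      rw [SimpleGraph.Walk.support_cons]; exact List.mem_cons_of_mem _ hm)) hvx hb
    exact ⟨SimpleGraph.Walk.cons (by exact h) q', congrArg (· + 1) hq'⟩

section LeafRemoval
variable {T : SimpleGraph α} {x n0 : α}

lemma geodesic_avoids_leaf (hT : T.IsTree) (hleaf : ∀ y, T.Adj x y ↔ y = n0)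
    {a b : α} (ha : a ≠ x) (hb : b ≠ x) :
    ∃ p : T.Walk a b, p.length = T.dist a b ∧ x ∉ p.support := by
  obtain ⟨p, hp, hl⟩ := hT.isConnected.exists_path_of_dist a b
  refine ⟨p, hl, fun hx => ?_⟩
  obtain ⟨y, z, hyz, hy, hz⟩ := interior_two_neighbors p hp hx (Ne.symm ha) (Ne.symm hb)
  rw [hleaf] at hy hz
  exact hyz (hy.trans hz.symm)

lemma comap_dist (hT : T.IsTree) (hleaf : ∀ y, T.Adj x y ↔ y = n0)
    (a b : {y : α // y ≠ x}) :
    (T.comap (Subtype.val : {y : α // y ≠ x} → α)).dist a b = T.dist a.1 b.1 ∧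
    (T.comap (Subtype.val : {y : α // y ≠ x} → α)).Reachable a b := by
  obtain ⟨p, hl, hsup⟩ := geodesic_avoids_leaf hT hleaf a.2 b.2
  obtain ⟨q, hq⟩ := walk_avoid p hsup a.2 b.2
  have hreach : (T.comap (Subtype.val : {y : α // y ≠ x} → α)).Reachable a b := ⟨q⟩
  constructor
  · apply le_antisymm
    · have hq2 := SimpleGraph.dist_le q
      simp only [Subtype.coe_eta] at hq2
      omega
    · exact dist_le_dist_of_almostHom Subtype.val (fun c d h => Or.inr h)
        hT.isConnected hreach
  · exact hreach

lemma comap_isTree (hT : T.IsTree) (hleaf : ∀ y, T.Adj x y ↔ y = n0)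
    (hne : Nonempty {y : α // y ≠ x}) :
    (T.comap (Subtype.val : {y : α // y ≠ x} → α)).IsTree := by
  constructor
  · rw [SimpleGraph.connected_iff]
    exact ⟨fun a b => (comap_dist hT hleaf a b).2, hne⟩
  · intro v c hc
    have hmap : ((c.map ⟨Subtype.val, fun h => h⟩).IsCycle) :=
      hc.map Subtype.val_injective
    exact hT.IsAcyclic _ hmap

lemma far_partners_le [Fintype α] [DecidableEq α] (hC : T.Connected) {ℓ n : ℕ}
    (hcard : Fintype.card α = n) (hsm : ℓ + 2 ≤ n) (x : α) :
    (univ.filter (fun b => ℓ + 1 ≤ T.dist x b)).card ≤ n - 1 - ℓ := by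
  have hb := ballCount_ge hC x ℓ
  unfold ballCount at hb
  have hdisj : Disjoint (univ.filter (fun b => ℓ + 1 ≤ T.dist x b))
      (univ.filter (fun y => y ≠ x ∧ T.dist x y ≤ ℓ)) := by
    rw [Finset.disjoint_left]
    intro a ha1 ha2
    simp only [Finset.mem_filter, Finset.mem_univ, true_and] at ha1 ha2
    omega
  have hsub : (univ.filter (fun b => ℓ + 1 ≤ T.dist x b))
      ∪ (univ.filter (fun y => y ≠ x ∧ T.dist x y ≤ ℓ)) ⊆ univ.erase x := by
    intro a ha
    rw [Finset.mem_union] at ha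
    refine Finset.mem_erase.mpr ⟨?_, mem_univ _⟩
    rcases ha with ha | ha <;> simp only [Finset.mem_filter, Finset.mem_univ, true_and] at ha
    · intro he
      subst he
      rw [SimpleGraph.dist_self] at ha
      omega
    · exact ha.1
  have hcu := Finset.card_union_of_disjoint hdisj
  have hle := Finset.card_le_card hsub
  rw [hcu] at hle
  rw [Finset.card_erase_of_mem (mem_univ x), Finset.card_univ, hcard] at hle
  have hmin : min ℓ (Fintype.card α - 1) = ℓ := by rw [hcard]; omega
  rw [hmin] at hb
  omega

end LeafRemoval

lemma tree_farCount_le :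
    ∀ (n : ℕ) {β : Type u_99} [inst1 : Fintype β] [inst2 : DecidableEq β]
    (T : SimpleGraph β), T.IsTree → Fintype.card β = n → ∀ ℓ, 1 ≤ ℓ →
    farCount T ℓ ≤ (n - ℓ) * (n - ℓ - 1) := by
  intro n
  induction n using Nat.strong_induction_on with
  | _ n ih =>
  intro β _ _ T hT hcard ℓ hℓ
  classical
  by_cases hsmall : n ≤ ℓ + 1
  · have hz : farCount T ℓ = 0 := by
      unfold farCount
      rw [Finset.card_eq_zero, Finset.filter_eq_empty_iff]
      intro p _
      have hd := dist_le_card hT.isConnected p.1 p.2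
      rw [hcard] at hd
      omega
    rw [hz]
    exact Nat.zero_le _
  · push_neg at hsmall
    obtain ⟨x, n0, hleaf⟩ := tree_exists_leaf hT (by omega)
    set T' := T.comap (Subtype.val : {y : β // y ≠ x} → β) with hT'def
    have hnty : Nonempty {y : β // y ≠ x} := by
      rw [← Fintype.card_pos_iff, card_subtype_ne, hcard]
      omega
    have htree' : T'.IsTree := comap_isTree hT hleaf hnty
    have hcard' : Fintype.card {y : β // y ≠ x} = n - 1 := by rw [card_subtype_ne, hcard]
    have hind := ih (n - 1) (by omega) T' htree' hcard' ℓ hℓ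
    have hn0x : n0 ≠ x := fun h => T.loopless.irrefl x (h ▸ ((hleaf n0).mpr rfl))
    set toSub : β → {y : β // y ≠ x} := fun y => if h : y = x then ⟨n0, hn0x⟩ else ⟨y, h⟩
      with htoSub
    set S := univ.offDiag.filter (fun p : β × β => ℓ + 1 ≤ T.dist p.1 p.2) with hS
    have hfc : farCount T ℓ = S.card := rfl
    set P : β × β → Prop := fun p => p.1 ≠ x ∧ p.2 ≠ x with hP
    have hsplitcard := Finset.card_filter_add_card_filter_not
      (s := S) (p := P)
    have h1 : (S.filter P).card ≤ farCount T' ℓ := by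
      unfold farCount
      apply Finset.card_le_card_of_injOn (fun p => (toSub p.1, toSub p.2))
      · intro p hp
        rw [Finset.mem_coe, Finset.mem_filter] at hp
        obtain ⟨hpS, hp1, hp2⟩ := hp
        rw [hS, Finset.mem_filter, Finset.mem_offDiag] at hpS
        obtain ⟨⟨-, -, hne⟩, hdist⟩ := hpS
        have e1 : toSub p.1 = ⟨p.1, hp1⟩ := dif_neg hp1
        have e2 : toSub p.2 = ⟨p.2, hp2⟩ := dif_neg hp2
        refine Finset.mem_filter.mpr ⟨Finset.mem_offDiag.mpr ⟨mem_univ _, mem_univ _, ?_⟩, ?_⟩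
        · simp only [e1, e2]
          intro he
          exact hne (congrArg Subtype.val he)
        · simp only [e1, e2]
          rw [(comap_dist hT hleaf ⟨p.1, hp1⟩ ⟨p.2, hp2⟩).1]
          exact hdist
      · intro p hp q hq hpq
        rw [Finset.mem_coe, Finset.mem_filter] at hp hq
        obtain ⟨-, hp1, hp2⟩ := hp
        obtain ⟨-, hq1, hq2⟩ := hq
        have e1 : toSub p.1 = ⟨p.1, hp1⟩ := dif_neg hp1
        have e2 : toSub p.2 = ⟨p.2, hp2⟩ := dif_neg hp2
        have e3 : toSub q.1 = ⟨q.1, hq1⟩ := dif_neg hq1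
        have e4 : toSub q.2 = ⟨q.2, hq2⟩ := dif_neg hq2
        simp only [e1, e2, e3, e4, Prod.mk.injEq, Subtype.mk.injEq] at hpq
        exact Prod.ext hpq.1 hpq.2
    have h2 : (S.filter (fun p => ¬ P p)).card ≤ 2 * (n - 1 - ℓ) := by
      have hfp1 : (S.filter (fun p => p.1 = x)).card
          ≤ (univ.filter (fun b => ℓ + 1 ≤ T.dist x b)).card := by
        apply Finset.card_le_card_of_injOn Prod.snd
        · intro p hp
          rw [Finset.mem_coe, Finset.mem_filter] at hp
          obtain ⟨hpS, hpx⟩ := hp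
          rw [hS, Finset.mem_filter] at hpS
          simp only [Finset.coe_filter, Set.mem_setOf_eq, Finset.mem_univ, true_and]
          rw [← hpx]
          exact hpS.2
        · intro p hp q hq hpq
          rw [Finset.mem_coe, Finset.mem_filter] at hp hq
          exact Prod.ext (hp.2.trans hq.2.symm) hpq
      have hfp2 : (S.filter (fun p => p.2 = x)).card
          ≤ (univ.filter (fun b => ℓ + 1 ≤ T.dist x b)).card := by
        apply Finset.card_le_card_of_injOn Prod.fst
        · intro p hp
          rw [Finset.mem_coe, Finset.mem_filter] at hp
          obtain ⟨hpS, hpx⟩ := hp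
          rw [hS, Finset.mem_filter] at hpS
          simp only [Finset.coe_filter, Set.mem_setOf_eq, Finset.mem_univ, true_and]
          rw [SimpleGraph.dist_comm, ← hpx]
          exact hpS.2
        · intro p hp q hq hpq
          rw [Finset.mem_coe, Finset.mem_filter] at hp hq
          exact Prod.ext hpq (hp.2.trans hq.2.symm)
      have hsubu : S.filter (fun p => ¬ P p)
          ⊆ (S.filter (fun p => p.1 = x)) ∪ (S.filter (fun p => p.2 = x)) := by
        intro p hp
        rw [Finset.mem_filter] at hp
        obtain ⟨hpS, hnp⟩ := hp
        rw [hP] at hnp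
        rw [Finset.mem_union]
        by_cases h : p.1 = x
        · exact Or.inl (Finset.mem_filter.mpr ⟨hpS, h⟩)
        · refine Or.inr (Finset.mem_filter.mpr ⟨hpS, ?_⟩)
          by_contra h2
          exact hnp ⟨h, h2⟩
      have hfar : (univ.filter (fun b => ℓ + 1 ≤ T.dist x b)).card ≤ n - 1 - ℓ :=
        far_partners_le hT.isConnected hcard (by omega) x
      calc (S.filter (fun p => ¬ P p)).card
          ≤ ((S.filter (fun p => p.1 = x)) ∪ (S.filter (fun p => p.2 = x))).card :=
            Finset.card_le_card hsubu
        _ ≤ (S.filter (fun p => p.1 = x)).card + (S.filter (fun p => p.2 = x)).card :=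
            Finset.card_union_le _ _
        _ ≤ 2 * (n - 1 - ℓ) := by omega
    have harith : (n-1-ℓ)*(n-1-ℓ-1) + 2*(n-1-ℓ) = (n-ℓ)*(n-ℓ-1) := by
      obtain ⟨b, hb⟩ : ∃ b, n - ℓ - 1 = b + 1 := ⟨n - ℓ - 2, by omega⟩
      have e1 : n - 1 - ℓ = b + 1 := by omega
      have e2 : n - 1 - ℓ - 1 = b := by omega
      have e3 : n - ℓ = b + 2 := by omega
      have e4 : n - ℓ - 1 = b + 1 := by omega
      rw [e2, e1, e4, e3]; ring
    calc farCount T ℓ = (S.filter P).card + (S.filter (fun p => ¬ P p)).card :=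
          hfc.trans hsplitcard.symm
      _ ≤ farCount T' ℓ + 2 * (n - 1 - ℓ) := Nat.add_le_add h1 h2
      _ ≤ (n-1-ℓ)*(n-1-ℓ-1) + 2*(n-1-ℓ) := Nat.add_le_add_right hind _
      _ = (n-ℓ)*(n-ℓ-1) := harith


end Trees

section Classify
variable {α : Type*}

lemma two_paths_absurd {T : SimpleGraph α} (hT : T.IsAcyclic) {u v : α}
    (p q : T.Walk u v) (hp : p.IsPath) (hq : q.IsPath) (hne : p.length ≠ q.length) : False := by
  have := isAcyclic_iff_path_unique.mp hT ⟨p, hp⟩ ⟨q, hq⟩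
  apply hne
  rw [show p = q from congrArg Subtype.val this]

lemma exists_mid {T : SimpleGraph α} (hC : T.Connected) {z a : α} (h2 : T.dist z a = 2) :
    ∃ m, T.Adj z m ∧ T.Adj m a := by
  obtain ⟨p, hp⟩ := (hC z a).exists_walk_length_eq_dist
  rw [h2] at hp
  cases p with
  | nil => rw [SimpleGraph.Walk.length_nil] at hp; omega
  | cons hzm q =>
    rename_i m
    cases q with
    | nil =>
      rw [SimpleGraph.Walk.length_cons, SimpleGraph.Walk.length_nil] at hp
      omega
    | cons hmw q2 =>
      rename_i w
      have hw : w = a := SimpleGraph.Walk.eq_of_length_eq_zero (p := q2) (by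
        rw [SimpleGraph.Walk.length_cons, SimpleGraph.Walk.length_cons] at hp
        omega)
      subst hw
      exact ⟨m, hzm, hmw⟩

lemma tree_iso_path {k : ℕ} [Fintype α] [DecidableEq α] {T : SimpleGraph α}
    (hT : T.IsTree) (hcard : Fintype.card α = k) (hk : 2 ≤ k) {a b : α}
    (hd : T.dist a b = k - 1) :
    Nonempty (T ≃g pathG k) := by
  have hC := hT.isConnected
  obtain ⟨p, hlen⟩ := (hC a b).exists_walk_length_eq_dist
  rw [hd] at hlen
  have hplen : p.length = T.dist a b := by rw [hlen, hd]
  have hgv : ∀ i : ℕ, i ≤ k - 1 → T.dist a (p.getVert i) = i := by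
    intro i hi
    exact (dist_getVert_eq hC hplen i (by omega)).1
  have hup : ∀ i j : ℕ, i ≤ j → j ≤ k - 1 → T.dist (p.getVert i) (p.getVert j) ≤ j - i := by
    intro i j hij hjk
    induction j, hij using Nat.le_induction with
    | base => rw [Nat.sub_self, SimpleGraph.dist_self]
    | succ j hij ih =>
      have hj : j < p.length := by omega
      have hadj := p.adj_getVert_succ hj
      calc T.dist (p.getVert i) (p.getVert (j+1))
          ≤ T.dist (p.getVert i) (p.getVert j) + T.dist (p.getVert j) (p.getVert (j+1)) :=
            hC.dist_triangle
        _ ≤ (j - i) + 1 := Nat.add_le_add (ih (by omega))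
            (le_of_eq (SimpleGraph.dist_eq_one_iff_adj.mpr hadj))
        _ = j + 1 - i := by omega
  have hdist : ∀ i j : ℕ, i ≤ j → j ≤ k - 1 →
      T.dist (p.getVert i) (p.getVert j) = j - i := by
    intro i j hij hjk
    refine le_antisymm (hup i j hij hjk) ?_
    have h1 := hgv i (by omega)
    have h2 := hgv j hjk
    have h3 : T.dist a (p.getVert j) ≤ T.dist a (p.getVert i) +
        T.dist (p.getVert i) (p.getVert j) := hC.dist_triangle
    omega
  set f : Fin k → α := fun i => p.getVert i with hfdef
  have hinj : Function.Injective f := by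
    intro i j hij
    have h1 := hgv i (by omega)
    have h2 := hgv j (by omega)
    rw [hfdef] at hij
    simp only at hij
    rw [hij] at h1
    exact Fin.ext (by omega)
  have hbij : Function.Bijective f := (Fintype.bijective_iff_injective_and_card f).mpr
    ⟨hinj, by rw [Fintype.card_fin, hcard]⟩
  set e : Fin k ≃ α := Equiv.ofBijective f hbij with hedef
  have hiso : ∀ i j : Fin k, T.Adj (e i) (e j) ↔ (pathG k).Adj i j := by
    intro i j
    have he : ∀ i : Fin k, e i = p.getVert i := fun i => rfl
    have key : ∀ i j : Fin k, (i : ℕ) ≤ (j : ℕ) →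
        (T.Adj (e i) (e j) ↔ (j : ℕ) = (i : ℕ) + 1) := by
      intro i j hij
      rw [he, he, ← SimpleGraph.dist_eq_one_iff_adj,
        hdist i j hij (by omega)]
      omega
    rcases le_total (i : ℕ) (j : ℕ) with h | h
    · rw [key i j h, pathG_adj]
      omega
    · rw [SimpleGraph.adj_comm, key j i h, pathG_adj]
      omega
  exact ⟨(⟨e, hiso _ _⟩ : (pathG k) ≃g T).symm⟩

lemma tree_iso_star {k : ℕ} [Fintype α] [DecidableEq α] {T : SimpleGraph α}
    (hT : T.IsTree) (hcard : Fintype.card α = k) (hk : 2 ≤ k) {c : α}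
    (hdom : ∀ z, z ≠ c → T.Adj c z) :
    Nonempty (T ≃g starG k) := by
  have h0 : (0 : ℕ) < k := by omega
  set e0 : α ≃ Fin k := Fintype.equivFinOfCardEq hcard with he0
  set e : Fin k ≃ α := (e0.trans (Equiv.swap (e0 c) ⟨0, h0⟩)).symm with hedef
  have hec : e ⟨0, h0⟩ = c := by
    rw [hedef]
    simp [Equiv.swap_apply_right]
  have hene : ∀ i : Fin k, (i : ℕ) ≠ 0 → e i ≠ c := by
    intro i hi hcon
    have : i = ⟨0, h0⟩ := by
      apply e.injective
      rw [hcon, hec]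
    exact hi (by rw [this])
  have hiso : ∀ i j : Fin k, T.Adj (e i) (e j) ↔ (starG k).Adj i j := by
    intro i j
    rw [starG_adj]
    constructor
    · intro hadj
      by_cases hi : (i : ℕ) = 0
      · refine Or.inl ⟨hi, fun hj => ?_⟩
        have : i = j := Fin.ext (by omega)
        rw [this] at hadj
        exact T.loopless.irrefl _ hadj
      · by_cases hj : (j : ℕ) = 0
        · exact Or.inr ⟨hj, hi⟩
        · exfalso
          have hu := hene i hi
          have hv := hene j hj
          have hcu : T.Adj c (e i) := hdom _ hu
          have hcv : T.Adj c (e j) := hdom _ hv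
          have hpath2 : (SimpleGraph.Walk.cons hcu.symm (SimpleGraph.Walk.cons hcv
              SimpleGraph.Walk.nil)).IsPath := by
            rw [SimpleGraph.Walk.isPath_def]
            simp only [SimpleGraph.Walk.support_cons, SimpleGraph.Walk.support_nil]
            refine List.nodup_cons.mpr ⟨?_, List.nodup_cons.mpr ⟨?_, List.nodup_singleton _⟩⟩
            · intro hmem
              rcases List.mem_cons.mp hmem with h | h
              · exact hu h
              · rw [List.mem_singleton] at h
                exact hadj.ne h
            · intro hmem
              rw [List.mem_singleton] at hmem
              exact hv hmem.symm
          exact two_paths_absurd hT.IsAcyclic hadj.toWalk _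
            (SimpleGraph.Path.singleton hadj).2
            hpath2 (by simp)
    · rintro (⟨hi, hj⟩ | ⟨hj, hi⟩)
      · have : e i = c := by
          have : i = ⟨0, h0⟩ := Fin.ext hi
          rw [this, hec]
        rw [this]
        exact hdom _ (hene j hj)
      · have : e j = c := by
          have : j = ⟨0, h0⟩ := Fin.ext hj
          rw [this, hec]
        rw [this]
        exact (hdom _ (hene i hi)).symm
  exact ⟨(⟨e, hiso _ _⟩ : (starG k) ≃g T).symm⟩

lemma isPath2 {T : SimpleGraph α} {u v w : α} (h1 : T.Adj u v) (h2 : T.Adj v w)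
    (huw : u ≠ w) :
    (SimpleGraph.Walk.cons h1 (SimpleGraph.Walk.cons h2 SimpleGraph.Walk.nil)).IsPath := by
  rw [SimpleGraph.Walk.isPath_def]
  simp only [SimpleGraph.Walk.support_cons, SimpleGraph.Walk.support_nil, List.nodup_cons,
    List.mem_cons, List.mem_singleton, List.not_mem_nil, List.nodup_nil, not_or,
    List.mem_nil_iff, or_false, and_true]
  exact ⟨⟨h1.ne, huw⟩, h2.ne, not_false⟩

lemma isPath3 {T : SimpleGraph α} {u v w x : α} (h1 : T.Adj u v) (h2 : T.Adj v w)
    (h3 : T.Adj w x) (huw : u ≠ w) (hux : u ≠ x) (hvx : v ≠ x) :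
    (SimpleGraph.Walk.cons h1 (SimpleGraph.Walk.cons h2 (SimpleGraph.Walk.cons h3
      SimpleGraph.Walk.nil))).IsPath := by
  rw [SimpleGraph.Walk.isPath_def]
  simp only [SimpleGraph.Walk.support_cons, SimpleGraph.Walk.support_nil, List.nodup_cons,
    List.mem_cons, List.mem_singleton, List.not_mem_nil, List.nodup_nil, not_or,
    List.mem_nil_iff, or_false, and_true]
  exact ⟨⟨h1.ne, huw, hux⟩, ⟨h2.ne, hvx⟩, h3.ne, not_false⟩

lemma dominating_of_diam_le_two [Fintype α] {T : SimpleGraph α} (hT : T.IsTree)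
    (hcard2 : 2 ≤ Fintype.card α) (hdiam : ∀ u v : α, T.dist u v ≤ 2) :
    ∃ c : α, ∀ z, z ≠ c → T.Adj c z := by
  classical
  have hC := hT.isConnected
  obtain ⟨a, b, hab⟩ : ∃ a b : α, T.Adj a b := by
    obtain ⟨a, b, hne⟩ := Fintype.exists_pair_of_one_lt_card (α := α) (by omega)
    obtain ⟨p⟩ := hC a b
    cases p with
    | nil => exact absurd rfl hne
    | cons h q => exact ⟨_, _, h⟩
  have dist2 : ∀ u v : α, u ≠ v → ¬ T.Adj u v → T.dist u v = 2 := by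
    intro u v hne hnadj
    have h1 := hdiam u v
    have h2 := hC.pos_dist_of_ne hne
    have h3 : T.dist u v ≠ 1 := fun h => hnadj (SimpleGraph.dist_eq_one_iff_adj.mp h)
    omega
  have claim1 : ∀ z, z ≠ a → z ≠ b → T.Adj a z ∨ T.Adj b z := by
    intro z hza hzb
    by_cases h1 : T.Adj a z
    · exact Or.inl h1
    by_cases h1' : T.Adj b z
    · exact Or.inr h1'
    exfalso
    have hdza : T.dist z a = 2 := by
      rw [SimpleGraph.dist_comm]
      exact dist2 a z (Ne.symm hza) h1
    have hdzb : T.dist z b = 2 := by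
      rw [SimpleGraph.dist_comm]
      exact dist2 b z (Ne.symm hzb) h1'
    obtain ⟨m, hzm, hma⟩ := exists_mid hC hdza
    obtain ⟨m', hzm', hm'b⟩ := exists_mid hC hdzb
    by_cases hmm : m = m'
    · subst hmm
      exact two_paths_absurd hT.IsAcyclic hab.toWalk
        (SimpleGraph.Walk.cons hma.symm (SimpleGraph.Walk.cons hm'b SimpleGraph.Walk.nil))
        (SimpleGraph.Path.singleton hab).2
        (isPath2 hma.symm hm'b hab.ne)
        (by simp)
    · have hmb : m ≠ b := by
        intro h
        subst h
        exact h1' hzm.symm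
      exact two_paths_absurd hT.IsAcyclic
        (SimpleGraph.Walk.cons hzm' (SimpleGraph.Walk.cons hm'b SimpleGraph.Walk.nil))
        (SimpleGraph.Walk.cons hzm (SimpleGraph.Walk.cons hma
          (SimpleGraph.Walk.cons hab SimpleGraph.Walk.nil)))
        (isPath2 hzm' hm'b hzb)
        (isPath3 hzm hma hab hza hzb hmb)
        (by simp)
  by_cases hda : ∀ z, z ≠ a → T.Adj a z
  · exact ⟨a, hda⟩
  · push_neg at hda
    obtain ⟨y, hy1, hy2⟩ := hda
    refine ⟨b, fun z hz => ?_⟩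
    by_cases hza : z = a
    · rw [hza]; exact hab.symm
    have hyb : y ≠ b := fun h => hy2 (h ▸ hab)
    have hyadjb : T.Adj b y := (claim1 y hy1 hyb).resolve_left hy2
    rcases claim1 z hza hz with hz1 | hz1
    swap
    · exact hz1
    by_contra hbz
    have hzy : z ≠ y := fun h => hy2 (h ▸ hz1)
    have hay : a ≠ y := Ne.symm hy1
    have hlong : (SimpleGraph.Walk.cons hz1.symm (SimpleGraph.Walk.cons hab
        (SimpleGraph.Walk.cons hyadjb SimpleGraph.Walk.nil))).IsPath :=
      isPath3 hz1.symm hab hyadjb hz hzy hay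
    by_cases hzyadj : T.Adj z y
    · exact two_paths_absurd hT.IsAcyclic hzyadj.toWalk _
        (SimpleGraph.Path.singleton hzyadj).2 hlong (by simp)
    · have hdzy : T.dist z y = 2 := dist2 z y hzy hzyadj
      obtain ⟨mm, hzmm, hmmy⟩ := exists_mid hC hdzy
      exact two_paths_absurd hT.IsAcyclic
        (SimpleGraph.Walk.cons hzmm (SimpleGraph.Walk.cons hmmy SimpleGraph.Walk.nil)) _
        (isPath2 hzmm hmmy hzy) hlong (by simp)

end Classify

end HararyAux

open HararyAux in
theorem harary_graft_path_lt_tree_lt_star {V W : Type*} [Fintype V] [Fintype W]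
    [DecidableEq W] (G₀ : SimpleGraph V) (hG₀ : G₀.Connected) (u : V)
    (k : ℕ) (hk : 4 ≤ k) (T : SimpleGraph W) (hT : T.IsTree) (hcard : Fintype.card W = k)
    (hTP : ¬ Nonempty (T ≃g pathG k)) (hTS : ¬ Nonempty (T ≃g starG k)) (w : W) :
    harary (graft G₀ u (pathG k) (⟨0, by omega⟩ : Fin k)) < harary (graft G₀ u T w) ∧
    harary (graft G₀ u T w) < harary (graft G₀ u (starG k) (⟨0, by omega⟩ : Fin k)) := by
  classical
  have hTC := hT.isConnected
  have hk0 : (0:ℕ) < k := by omega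
  have hPc : (pathG k).Connected := pathG_connected hk0
  have hSc : (starG k).Connected := starG_connected (by omega)
  have hcardFin : Fintype.card (Fin k) = k := Fintype.card_fin k
  have hdiam : ∀ x y : W, T.dist x y ≤ k - 2 := by
    intro x y
    by_contra h
    push_neg at h
    have hle := dist_le_card hTC x y
    rw [hcard] at hle
    have hde : T.dist x y = k - 1 := by omega
    exact hTP (tree_iso_path hT hcard (by omega) hde)
  have hfar3 : ∃ x y : W, 3 ≤ T.dist x y := by
    by_contra hcon
    push_neg at hcon
    obtain ⟨c, hdom⟩ := dominating_of_diam_le_two hT (by omega)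
      (fun x y => by have := hcon x y; omega)
    exact hTS (tree_iso_star hT hcard (by omega) hdom)
  have hTballge : ∀ ℓ : ℕ, min ℓ (k - 1) ≤ ballCount T w ℓ := by
    intro ℓ
    have h := ballCount_ge hTC w ℓ
    rw [hcard] at h
    exact h
  constructor
  · -- P_k < T
    apply harary_graft_lt hG₀ u hPc ⟨0, hk0⟩ hTC w (k := k) (by omega) hcardFin hcard
    · -- pairCount
      intro ℓ hℓ1 hℓ2
      have h1 := pair_far (pathG k) ℓ
      have h2 := pair_far T ℓ
      rw [hcardFin] at h1
      rw [hcard] at h2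
      have h3 := farCount_path_ge (n := k) hℓ1 hk0
      have h4 := tree_farCount_le k T hT hcard ℓ hℓ1
      omega
    · -- strict at k - 2
      refine ⟨k - 2, by omega, by omega, ?_⟩
      have hTfull : pairCount T (k - 2) = k * k - k := by
        unfold pairCount
        rw [Finset.filter_true_of_mem (fun p _ => hdiam p.1 p.2), Finset.offDiag_card,
          Finset.card_univ, hcard]
      have h1 := pair_far (pathG k) (k - 2)
      rw [hcardFin] at h1
      have h3 := farCount_path_ge (n := k) (ℓ := k - 2) (by omega) hk0
      have e1 : k - (k - 2) = 2 := by omega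
      rw [e1] at h3
      norm_num at h3
      omega
    · -- ballCount
      intro ℓ hℓ1 hℓ2
      have h1 := ballCount_path_le hk0 ℓ
      have h2 := hTballge ℓ
      omega
  · -- T < S_k
    apply harary_graft_lt hG₀ u hTC w hSc ⟨0, hk0⟩ (k := k) (by omega) hcard hcardFin
    · intro ℓ hℓ1 hℓ2
      by_cases hone : ℓ = 1
      · subst hone
        rw [pairCount_tree_one T hT hcard, pairCount_star_one (by omega)]
      · have hℓ2' : 2 ≤ ℓ := by omega
        rw [pairCount_star_big (by omega) hℓ2']
        have := pairCount_le_max T ℓ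
        rw [hcard] at this
        exact this
    · refine ⟨2, by omega, by omega, ?_⟩
      obtain ⟨x, y, hxy⟩ := hfar3
      have h1 := pairCount_lt_max T (ℓ := 2) (a := x) (b := y) (by omega)
      rw [hcard] at h1
      rw [pairCount_star_big (by omega) (by omega)]
      exact h1
    · intro ℓ hℓ1 hℓ2
      have h1 := ballCount_le_max T w ℓ
      rw [hcard] at h1
      have h2 : ballCount (starG k) (⟨0, hk0⟩ : Fin k) ℓ = k - 1 :=
        ballCount_star (by omega) hℓ1
      omega
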